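/- arXiv:2505.23737 — 6 statements merged into one kernel-verified Lean document; each statement's English description precedes it below -/
import Mathlib

section
/- For a symmetric positive definite matrix Λ ∈ ℝ^{n×n} and any matrix A ∈ ℝ^{m×n}, the nuclear norm of A satisfies ‖A‖_* ≤ sqrt(‖Λ‖_*) · ‖A‖_{Λ^{-1}}, where ‖A‖_{Λ^{-1}} = sqrt(trace(A Λ^{-1} A^T)). -/
open scoped BigOperators
open Matrix

/-- Nuclear norm of a real matrix: the sum of its singular values. -/
noncomputable def nucNorm {m n : ℕ} (A : Matrix (Fin m) (Fin n) ℝ) : ℝ :=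
  ∑ j, Real.sqrt ((Matrix.isHermitian_conjTranspose_mul_self A).eigenvalues j)

/-- The `Λ`-weighted norm `‖A‖_Λ = sqrt (trace (A Λ Aᵀ))`. -/
noncomputable def lamNorm {m n : ℕ} (Λ : Matrix (Fin n) (Fin n) ℝ)
    (A : Matrix (Fin m) (Fin n) ℝ) : ℝ :=
  Real.sqrt (A * Λ * Aᵀ).trace

open scoped MatrixOrder in
noncomputable def Matrix.PosSemidef.sqrt {n : ℕ} {M : Matrix (Fin n) (Fin n) ℝ}
    (_ : M.PosSemidef) : Matrix (Fin n) (Fin n) ℝ :=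
  CFC.sqrt M

open scoped MatrixOrder in
lemma Matrix.PosSemidef.posSemidef_sqrt {n : ℕ} {M : Matrix (Fin n) (Fin n) ℝ}
    (hM : M.PosSemidef) : hM.sqrt.PosSemidef :=
  (CFC.sqrt_nonneg M).posSemidef

open scoped MatrixOrder in
lemma Matrix.PosSemidef.sqrt_mul_self {n : ℕ} {M : Matrix (Fin n) (Fin n) ℝ}
    (hM : M.PosSemidef) : hM.sqrt * hM.sqrt = M :=
  CFC.sqrt_mul_sqrt_self M hM.nonneg

open scoped MatrixOrder in
lemma Matrix.PosSemidef.eq_sqrt_of_sq_eq {n : ℕ} {A B : Matrix (Fin n) (Fin n) ℝ}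
    (hA : A.PosSemidef) (hB : B.PosSemidef) (h : A ^ 2 = B) : A = hB.sqrt :=
  ((CFC.sqrt_eq_iff B A hB.nonneg hA.nonneg).mpr (by rw [← sq, h])).symm

open scoped MatrixOrder in
lemma Matrix.PosSemidef.sqrt_eq_spectral {n : ℕ} {M : Matrix (Fin n) (Fin n) ℝ}
    (hM : M.PosSemidef) : hM.sqrt = (hM.1.eigenvectorUnitary : Matrix (Fin n) (Fin n) ℝ) *
      diagonal (RCLike.ofReal ∘ Real.sqrt ∘ hM.1.eigenvalues) *
      star (hM.1.eigenvectorUnitary : Matrix (Fin n) (Fin n) ℝ) := by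
  rw [Matrix.PosSemidef.sqrt, CFC.sqrt_eq_cfc, cfc_nnreal_eq_real _ M, hM.1.cfc_eq,
    IsHermitian.cfc]
  simp [Unitary.conjStarAlgAut_apply]
  congr 3; funext i
  show Real.sqrt (max _ 0) = Real.sqrt _
  rw [max_eq_left (hM.eigenvalues_nonneg i)]

-- trace of the psd square root equals sum of sqrt of eigenvalues
lemma trace_sqrt {n : ℕ} {M : Matrix (Fin n) (Fin n) ℝ} (hM : M.PosSemidef) :
    hM.sqrt.trace = ∑ j, Real.sqrt (hM.1.eigenvalues j) := by
  rw [hM.sqrt_eq_spectral, Matrix.trace_mul_cycle]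
  rw [Matrix.mem_unitaryGroup_iff'.mp (Matrix.IsHermitian.eigenvectorUnitary hM.1).2]
  rw [one_mul, Matrix.trace_diagonal]
  simp

-- psd of transpose mul self over ℝ
lemma posSemidef_tm {m n : ℕ} (A : Matrix (Fin m) (Fin n) ℝ) : (Aᵀ * A).PosSemidef := by
  simpa using Matrix.posSemidef_conjTranspose_mul_self A

lemma nucNorm_eq {m n : ℕ} (A : Matrix (Fin m) (Fin n) ℝ) :
    nucNorm A = (posSemidef_tm A).sqrt.trace := by
  rw [trace_sqrt]; rfl

-- Frobenius Cauchy-Schwarz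
lemma frob_cs {m n : ℕ} (X Y : Matrix (Fin m) (Fin n) ℝ) :
    (Xᵀ * Y).trace ≤ Real.sqrt (Xᵀ * X).trace * Real.sqrt (Yᵀ * Y).trace := by
  have key : ∀ Z W : Matrix (Fin m) (Fin n) ℝ,
      (Zᵀ * W).trace = ∑ p : Fin m × Fin n, Z p.1 p.2 * W p.1 p.2 := by
    intro Z W
    have h : (Zᵀ * W).trace = ∑ j, ∑ i, Z i j * W i j := by
      simp [Matrix.trace, Matrix.diag, Matrix.mul_apply]
    rw [h, ← Finset.univ_product_univ, Finset.sum_product]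
    rw [Finset.sum_comm]
  have cs := Finset.sum_mul_sq_le_sq_mul_sq Finset.univ
    (fun p : Fin m × Fin n => X p.1 p.2) (fun p => Y p.1 p.2)
  have h1 : (Xᵀ * X).trace = ∑ p : Fin m × Fin n, X p.1 p.2 ^ 2 := by
    rw [key]; simp [sq]
  have h2 : (Yᵀ * Y).trace = ∑ p : Fin m × Fin n, Y p.1 p.2 ^ 2 := by
    rw [key]; simp [sq]
  rw [key, h1, h2]
  calc (∑ p : Fin m × Fin n, X p.1 p.2 * Y p.1 p.2)
      ≤ |∑ p : Fin m × Fin n, X p.1 p.2 * Y p.1 p.2| := le_abs_self _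
    _ = Real.sqrt ((∑ p : Fin m × Fin n, X p.1 p.2 * Y p.1 p.2) ^ 2) :=
        (Real.sqrt_sq_eq_abs _).symm
    _ ≤ Real.sqrt ((∑ p : Fin m × Fin n, X p.1 p.2 ^ 2) * ∑ p : Fin m × Fin n, Y p.1 p.2 ^ 2) :=
        Real.sqrt_le_sqrt cs
    _ = _ := Real.sqrt_mul (by positivity) _

theorem nuclear_le_sqrt_nucLam_mul_lamInvNorm
    {m n : ℕ} (Λ : Matrix (Fin n) (Fin n) ℝ) (hΛ : Λ.PosDef)
    (A : Matrix (Fin m) (Fin n) ℝ) :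
    nucNorm A ≤ Real.sqrt (nucNorm Λ) * lamNorm Λ⁻¹ A := by
  have hS := posSemidef_tm A
  set S := hS.sqrt with hSdef
  have hSps : S.PosSemidef := hS.posSemidef_sqrt
  have hSsym : Sᵀ = S := by
    have := hSps.1; simpa [Matrix.IsHermitian] using this
  have hSS : S * S = Aᵀ * A := hS.sqrt_mul_self
  -- L = sqrt Λ
  have hΛps := hΛ.posSemidef
  set L := hΛps.sqrt with hLdef
  have hLps : L.PosSemidef := hΛps.posSemidef_sqrt
  have hLsym : Lᵀ = L := by
    have := hLps.1; simpa [Matrix.IsHermitian] using this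
  have hLL : L * L = Λ := hΛps.sqrt_mul_self
  have hdet : IsUnit L.det := by
    have hΛdet : Λ.det ≠ 0 := ne_of_gt hΛ.det_pos
    rw [← hLL, Matrix.det_mul] at hΛdet
    exact isUnit_iff_ne_zero.mpr (fun h => hΛdet (by rw [h, mul_zero]))
  have hLinv : L * L⁻¹ = 1 := Matrix.mul_nonsing_inv _ hdet
  have hLinvsym : (L⁻¹)ᵀ = L⁻¹ := by
    have : (L⁻¹).IsHermitian := Matrix.IsHermitian.inv hLps.1
    simpa [Matrix.IsHermitian] using this
  -- nucNorm Λ = Λ.trace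
  have hnucΛ : nucNorm Λ = Λ.trace := by
    have hΛsym : Λᵀ = Λ := by
      have := hΛps.1; simpa [Matrix.IsHermitian] using this
    have hsq : Λ ^ 2 = Λᵀ * Λ := by rw [hΛsym, sq]
    have := hΛps.eq_sqrt_of_sq_eq (posSemidef_tm Λ) hsq
    rw [nucNorm_eq, ← this]
  -- trace identity: S = Lᵀ * (L⁻¹ * S)
  have hfact : S = L * (L⁻¹ * S) := by
    rw [← Matrix.mul_assoc, hLinv, Matrix.one_mul]
  have hYY : ((L⁻¹ * S)ᵀ * (L⁻¹ * S)).trace = (A * Λ⁻¹ * Aᵀ).trace := by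
    have hΛinv : Λ⁻¹ = L⁻¹ * L⁻¹ := by rw [← hLL, Matrix.mul_inv_rev]
    rw [Matrix.transpose_mul, hLinvsym, hSsym]
    calc (S * L⁻¹ * (L⁻¹ * S)).trace
        = (S * (L⁻¹ * L⁻¹) * S).trace := by
          rw [Matrix.mul_assoc, Matrix.mul_assoc, Matrix.mul_assoc]
      _ = (S * Λ⁻¹ * S).trace := by rw [hΛinv]
      _ = (S * S * Λ⁻¹).trace := by
          rw [Matrix.trace_mul_cycle]
      _ = (Λ⁻¹ * (Aᵀ * A)).trace := by rw [hSS, Matrix.trace_mul_comm]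
      _ = (A * Λ⁻¹ * Aᵀ).trace := by
          rw [← Matrix.mul_assoc, Matrix.trace_mul_cycle]
  have hcs := frob_cs Lᵀ (L⁻¹ * S)
  rw [Matrix.transpose_transpose, hLsym, hLL, hYY, ← hfact] at hcs
  rw [nucNorm_eq, hnucΛ, lamNorm]
  exact hcs
end

section
/- If f : ℝ^{m×n} → ℝ is 1-Λ-norm Lipschitz smooth with positive definite Λ ∈ ℝ^{n×n} (i.e., ‖∇f(W) − ∇f(W')‖_{Λ^{-1}} ≤ ‖W − W'‖_Λ for all W, W'), then f is ‖Λ‖_* spectral norm Lipschitz smooth, i.e., ‖∇f(W) − ∇f(W')‖_* ≤ ‖Λ‖_* · ‖W − W'‖_op for all W, W'. -/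
open scoped BigOperators
open Matrix

/-- Spectral (operator) norm of a real matrix: the largest singular value. -/
noncomputable def specNorm {m n : ℕ} (A : Matrix (Fin m) (Fin n) ℝ) : ℝ :=
  Real.sqrt (⨆ j, (Matrix.isHermitian_conjTranspose_mul_self A).eigenvalues j)

namespace LamAux

/-- The eigenvalues of `AᵀA` (squares of the singular values of `A`). -/
noncomputable def ev {m n : ℕ} (A : Matrix (Fin m) (Fin n) ℝ) (j : Fin n) : ℝ :=
  (Matrix.isHermitian_conjTranspose_mul_self A).eigenvalues j

/-- An orthonormal family of eigenvectors of `AᵀA`. -/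
noncomputable def w {m n : ℕ} (A : Matrix (Fin m) (Fin n) ℝ) (j : Fin n) : Fin n → ℝ :=
  ((Matrix.isHermitian_conjTranspose_mul_self A).eigenvectorBasis j : EuclideanSpace ℝ (Fin n))

lemma dot_self_nonneg {m : ℕ} (x : Fin m → ℝ) : 0 ≤ x ⬝ᵥ x :=
  Finset.sum_nonneg fun _ _ => mul_self_nonneg _

/-- Cauchy–Schwarz for dot products. -/
lemma dot_cs {m : ℕ} (x y : Fin m → ℝ) :
    x ⬝ᵥ y ≤ Real.sqrt (x ⬝ᵥ x) * Real.sqrt (y ⬝ᵥ y) := by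
  have h := Real.sum_mul_le_sqrt_mul_sqrt (Finset.univ : Finset (Fin m)) x y
  simpa [dotProduct, pow_two] using h

lemma dot_mulVec_transpose {m n : ℕ} (A : Matrix (Fin m) (Fin n) ℝ)
    (y : Fin n → ℝ) (x : Fin m → ℝ) : (A *ᵥ y) ⬝ᵥ x = y ⬝ᵥ (Aᵀ *ᵥ x) := by
  rw [Matrix.dotProduct_mulVec, Matrix.vecMul_transpose, dotProduct_comm]

lemma trace_transpose_mul_mul {n k : ℕ} (V : Matrix (Fin n) (Fin k) ℝ)
    (B : Matrix (Fin n) (Fin n) ℝ) :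
    (Vᵀ * B * V).trace = ∑ j, (fun i => V i j) ⬝ᵥ (B *ᵥ fun i => V i j) := by
  simp only [Matrix.trace, Matrix.diag, Matrix.mul_apply, Matrix.transpose_apply,
    dotProduct, Matrix.mulVec, Finset.sum_mul, Finset.mul_sum]
  refine Finset.sum_congr rfl fun j _ => ?_
  rw [Finset.sum_comm]
  refine Finset.sum_congr rfl fun i _ => Finset.sum_congr rfl fun l _ => by ring

lemma w_mulVec {m n : ℕ} (A : Matrix (Fin m) (Fin n) ℝ) (j : Fin n) :
    (Aᵀ * A) *ᵥ w A j = ev A j • w A j :=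
  (Matrix.isHermitian_conjTranspose_mul_self A).mulVec_eigenvectorBasis j

lemma w_dot {m n : ℕ} (A : Matrix (Fin m) (Fin n) ℝ) (j k : Fin n) :
    w A j ⬝ᵥ w A k = if j = k then 1 else 0 := by
  have h := (Matrix.isHermitian_conjTranspose_mul_self A).eigenvectorBasis.orthonormal
  rw [orthonormal_iff_ite] at h
  have h' := h j k
  simpa [PiLp.inner_apply, RCLike.inner_apply, dotProduct, w, mul_comm] using h'

lemma mulVec_w_dot {m n : ℕ} (A : Matrix (Fin m) (Fin n) ℝ) (j k : Fin n) :
    (A *ᵥ w A j) ⬝ᵥ (A *ᵥ w A k) = if j = k then ev A j else 0 := by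
  rw [dot_mulVec_transpose, Matrix.mulVec_mulVec, w_mulVec, dotProduct_smul,
    w_dot, smul_eq_mul]
  by_cases h : j = k
  · subst h; simp
  · simp [h]

lemma ev_nonneg {m n : ℕ} (A : Matrix (Fin m) (Fin n) ℝ) (j : Fin n) : 0 ≤ ev A j := by
  have h := mulVec_w_dot A j j
  simp only [if_true, eq_self_iff_true] at h
  rw [← h]
  exact dot_self_nonneg _

/-- The matrix whose columns are the eigenvectors of `AᵀA`. -/
noncomputable def Vm {m n : ℕ} (A : Matrix (Fin m) (Fin n) ℝ) : Matrix (Fin n) (Fin n) ℝ :=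
  Matrix.of fun i j => w A j i

lemma VtV {m n : ℕ} (A : Matrix (Fin m) (Fin n) ℝ) : (Vm A)ᵀ * Vm A = 1 := by
  ext j k
  have := w_dot A j k
  simpa [Matrix.mul_apply, Vm, dotProduct, Matrix.one_apply] using this

lemma VVt {m n : ℕ} (A : Matrix (Fin m) (Fin n) ℝ) : Vm A * (Vm A)ᵀ = 1 :=
  mul_eq_one_comm.mp (VtV A)

lemma trace_eq_sum_w {m n : ℕ} (A : Matrix (Fin m) (Fin n) ℝ)
    (B : Matrix (Fin n) (Fin n) ℝ) :
    B.trace = ∑ j, w A j ⬝ᵥ (B *ᵥ w A j) := by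
  have h := trace_transpose_mul_mul (Vm A) B
  have h2 : ((Vm A)ᵀ * B * Vm A).trace = B.trace := by
    rw [Matrix.mul_assoc, Matrix.trace_mul_comm, Matrix.mul_assoc, VVt, Matrix.mul_one]
  rw [← h2, h]
  rfl

lemma rayleigh {m n : ℕ} (A : Matrix (Fin m) (Fin n) ℝ) (x : Fin n → ℝ) :
    (A *ᵥ x) ⬝ᵥ (A *ᵥ x) ≤ (⨆ j, ev A j) * (x ⬝ᵥ x) := by
  have hMV : (Aᵀ * A) * Vm A = Vm A * Matrix.diagonal (ev A) := by
    ext i j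
    have h1 : ((Aᵀ * A) * Vm A) i j = ((Aᵀ * A) *ᵥ w A j) i := by
      simp [Matrix.mul_apply, Matrix.mulVec, dotProduct, Vm]
    rw [h1, w_mulVec, Matrix.mul_diagonal]
    simp [Vm, mul_comm]
  have hx : Vm A *ᵥ ((Vm A)ᵀ *ᵥ x) = x := by
    rw [Matrix.mulVec_mulVec, VVt, Matrix.one_mulVec]
  have hyx : ((Vm A)ᵀ *ᵥ x) ⬝ᵥ ((Vm A)ᵀ *ᵥ x) = x ⬝ᵥ x := by
    rw [dot_mulVec_transpose, Matrix.transpose_transpose, Matrix.mulVec_mulVec, VVt,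
      Matrix.one_mulVec]
  have hAx : (Aᵀ * A) *ᵥ x = Vm A *ᵥ (Matrix.diagonal (ev A) *ᵥ ((Vm A)ᵀ *ᵥ x)) := by
    conv_lhs => rw [← hx]
    rw [Matrix.mulVec_mulVec, hMV, ← Matrix.mulVec_mulVec]
  have hxMx : (A *ᵥ x) ⬝ᵥ (A *ᵥ x)
      = ((Vm A)ᵀ *ᵥ x) ⬝ᵥ (Matrix.diagonal (ev A) *ᵥ ((Vm A)ᵀ *ᵥ x)) := by
    calc (A *ᵥ x) ⬝ᵥ (A *ᵥ x) = x ⬝ᵥ ((Aᵀ * A) *ᵥ x) := by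
          rw [dot_mulVec_transpose, Matrix.mulVec_mulVec]
      _ = x ⬝ᵥ (Vm A *ᵥ (Matrix.diagonal (ev A) *ᵥ ((Vm A)ᵀ *ᵥ x))) := by rw [hAx]
      _ = (Vm A *ᵥ (Matrix.diagonal (ev A) *ᵥ ((Vm A)ᵀ *ᵥ x))) ⬝ᵥ x :=
          dotProduct_comm _ _
      _ = (Matrix.diagonal (ev A) *ᵥ ((Vm A)ᵀ *ᵥ x)) ⬝ᵥ ((Vm A)ᵀ *ᵥ x) :=
          dot_mulVec_transpose _ _ _
      _ = ((Vm A)ᵀ *ᵥ x) ⬝ᵥ (Matrix.diagonal (ev A) *ᵥ ((Vm A)ᵀ *ᵥ x)) :=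
          dotProduct_comm _ _
  rw [hxMx, ← hyx]
  set z := (Vm A)ᵀ *ᵥ x with hz
  have h1 : z ⬝ᵥ (Matrix.diagonal (ev A) *ᵥ z) = ∑ j, ev A j * (z j * z j) := by
    simp only [dotProduct, Matrix.mulVec_diagonal]
    exact Finset.sum_congr rfl fun j _ => by ring
  have h2 : (⨆ j, ev A j) * (z ⬝ᵥ z) = ∑ j, (⨆ j, ev A j) * (z j * z j) := by
    simp only [dotProduct, Finset.mul_sum]
  rw [h1, h2]
  exact Finset.sum_le_sum fun j _ => mul_le_mul_of_nonneg_right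
    (le_ciSup ((Set.finite_range _).bddAbove) j) (mul_self_nonneg _)

lemma real_conjTranspose {m n : ℕ} (A : Matrix (Fin m) (Fin n) ℝ) : Aᴴ = Aᵀ := by
  ext i j; simp [Matrix.conjTranspose_apply]

lemma psd_trace_nonneg {k : ℕ} {N : Matrix (Fin k) (Fin k) ℝ} (h : N.PosSemidef) :
    0 ≤ N.trace := by
  exact h.trace_nonneg

lemma trace_conj_le {m n : ℕ} {M : Matrix (Fin m) (Fin m) ℝ} (hM : M.PosSemidef)
    (U : Matrix (Fin m) (Fin n) ℝ) (hU : U * (Uᵀ * U) = U) :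
    (Uᵀ * M * U).trace ≤ M.trace := by
  set P := U * Uᵀ with hP
  have hPsym : Pᵀ = P := by rw [hP, Matrix.transpose_mul, Matrix.transpose_transpose]
  have hPP : P * P = P := by
    rw [hP, Matrix.mul_assoc, ← Matrix.mul_assoc Uᵀ U Uᵀ, ← Matrix.mul_assoc U (Uᵀ * U) Uᵀ, hU]
  have h1 : (Uᵀ * M * U).trace = (M * P).trace := by
    rw [Matrix.mul_assoc, Matrix.trace_mul_comm, Matrix.mul_assoc]
  have hQ : ((1 - P) * M * (1 - P)).PosSemidef := by
    have := hM.mul_mul_conjTranspose_same (1 - P)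
    rwa [real_conjTranspose, Matrix.transpose_sub, Matrix.transpose_one, hPsym] at this
  have h2 : (M * (1 - P)).trace = ((1 - P) * M * (1 - P)).trace := by
    have hQQ : (1 - P) * (1 - P) = 1 - P := by
      rw [Matrix.sub_mul, Matrix.mul_sub, Matrix.mul_sub, hPP]
      simp
    calc (M * (1 - P)).trace = (M * ((1 - P) * (1 - P))).trace := by rw [hQQ]
      _ = ((M * (1 - P)) * (1 - P)).trace := by rw [Matrix.mul_assoc]
      _ = ((1 - P) * (M * (1 - P))).trace := by rw [Matrix.trace_mul_comm]
      _ = ((1 - P) * M * (1 - P)).trace := by rw [Matrix.mul_assoc]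
  have h3 : 0 ≤ (M * (1 - P)).trace := h2 ▸ psd_trace_nonneg hQ
  have h4 : (M * (1 - P)).trace = M.trace - (M * P).trace := by
    rw [Matrix.mul_sub, Matrix.mul_one, Matrix.trace_sub]
  rw [h1]
  linarith

/-- Singular values. -/
noncomputable def sig {m n : ℕ} (A : Matrix (Fin m) (Fin n) ℝ) (j : Fin n) : ℝ :=
  Real.sqrt (ev A j)

/-- Normalized left singular vectors (zero where the singular value vanishes). -/
noncomputable def uu {m n : ℕ} (A : Matrix (Fin m) (Fin n) ℝ) (j : Fin n) : Fin m → ℝ :=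
  (sig A j)⁻¹ • (A *ᵥ w A j)

lemma sig_mul_self {m n : ℕ} (A : Matrix (Fin m) (Fin n) ℝ) (j : Fin n) :
    sig A j * sig A j = ev A j := Real.mul_self_sqrt (ev_nonneg A j)

lemma uu_dot_mulVec {m n : ℕ} (A : Matrix (Fin m) (Fin n) ℝ) (j : Fin n) :
    uu A j ⬝ᵥ (A *ᵥ w A j) = sig A j := by
  unfold uu
  rw [smul_dotProduct]
  have h := mulVec_w_dot A j j
  simp only [if_true, eq_self_iff_true] at h
  rw [h, ← sig_mul_self A j, smul_eq_mul]
  rcases eq_or_ne (sig A j) 0 with h0 | h0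
  · rw [h0]; simp
  · field_simp

lemma uu_dot {m n : ℕ} (A : Matrix (Fin m) (Fin n) ℝ) (j k : Fin n) :
    uu A j ⬝ᵥ uu A k = if j = k then (if sig A j = 0 then 0 else 1) else 0 := by
  unfold uu
  rw [smul_dotProduct, dotProduct_smul, mulVec_w_dot, smul_eq_mul, smul_eq_mul]
  by_cases h : j = k
  · subst h
    simp only [if_true, eq_self_iff_true]
    rw [← sig_mul_self A j]
    rcases eq_or_ne (sig A j) 0 with h0 | h0
    · rw [h0]; simp
    · rw [if_neg h0]; field_simp
  · simp [h]

/-- The matrix of left singular vectors. -/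
noncomputable def Um {m n : ℕ} (A : Matrix (Fin m) (Fin n) ℝ) : Matrix (Fin m) (Fin n) ℝ :=
  Matrix.of fun i j => uu A j i

lemma UtU {m n : ℕ} (A : Matrix (Fin m) (Fin n) ℝ) :
    (Um A)ᵀ * Um A = Matrix.diagonal (fun j => if sig A j = 0 then 0 else 1) := by
  ext j k
  have h : ((Um A)ᵀ * Um A) j k = uu A j ⬝ᵥ uu A k := by
    simp [Matrix.mul_apply, Um, dotProduct]
  rw [h, uu_dot, Matrix.diagonal_apply]

lemma UmUtU {m n : ℕ} (A : Matrix (Fin m) (Fin n) ℝ) :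
    Um A * ((Um A)ᵀ * Um A) = Um A := by
  rw [UtU]
  ext i j
  rw [Matrix.mul_diagonal]
  rcases eq_or_ne (sig A j) 0 with h | h
  · simp [h, Um, uu]
  · simp [h]

end LamAux

open LamAux MatrixOrder in
/-- 1-Λ-norm Lipschitz smoothness implies `‖Λ‖_*` spectral norm Lipschitz
smoothness. -/
theorem lamSmooth_implies_spectralSmooth
    {m n : ℕ} (Λ : Matrix (Fin n) (Fin n) ℝ) (hΛ : Λ.PosDef)
    (f : Matrix (Fin m) (Fin n) ℝ → ℝ)
    (gradf : Matrix (Fin m) (Fin n) ℝ → Matrix (Fin m) (Fin n) ℝ)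
    (hgrad : ∀ W V : Matrix (Fin m) (Fin n) ℝ,
      HasDerivAt (fun t : ℝ => f (W + t • V)) (∑ i, ∑ j, gradf W i j * V i j) 0)
    (hsmooth : ∀ W W' : Matrix (Fin m) (Fin n) ℝ,
      lamNorm Λ⁻¹ (gradf W - gradf W') ≤ lamNorm Λ (W - W')) :
    ∀ W W' : Matrix (Fin m) (Fin n) ℝ,
      nucNorm (gradf W - gradf W') ≤ nucNorm Λ * specNorm (W - W') := by
  intro W W'
  set G := gradf W - gradf W' with hGdef
  set D := W - W' with hDdef
  have hΛs : Λ.PosSemidef := hΛ.posSemidef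
  set S := CFC.sqrt Λ with hSdef
  have hSS : S * S = Λ := CFC.sqrt_mul_sqrt_self Λ hΛs.nonneg
  have hSsym : Sᵀ = S := by
    have h : Sᴴ = S := (CFC.sqrt_nonneg Λ).posSemidef.1.eq
    rwa [real_conjTranspose] at h
  have hdet : IsUnit S.det := by
    have h1 : S.det * S.det = Λ.det := by rw [← Matrix.det_mul, hSS]
    have h2 : (0:ℝ) < Λ.det := hΛ.det_pos
    refine isUnit_iff_ne_zero.mpr fun h0 => ?_
    rw [h0, mul_zero] at h1
    rw [← h1] at h2
    exact lt_irrefl 0 h2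
  have hSiS : S⁻¹ * S = 1 := Matrix.nonsing_inv_mul _ hdet
  have hSiT : (S⁻¹)ᵀ = S⁻¹ := by rw [Matrix.transpose_nonsing_inv, hSsym]
  have hSiSi : S⁻¹ * S⁻¹ = Λ⁻¹ := by rw [← Matrix.mul_inv_rev, hSS]
  have htrΛ : 0 ≤ Λ.trace := psd_trace_nonneg hΛs
  -- the key "change of inner product" identity
  have key : ∀ (x y : Fin n → ℝ), x ⬝ᵥ y = (S⁻¹ *ᵥ x) ⬝ᵥ (S *ᵥ y) := by
    intro x y
    rw [dot_mulVec_transpose, hSiT, Matrix.mulVec_mulVec, hSiS, Matrix.one_mulVec]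
  -- Part C : trace Λ ≤ nuclear norm of Λ
  have partC : Λ.trace ≤ nucNorm Λ := by
    rw [trace_eq_sum_w Λ Λ]
    unfold nucNorm
    refine Finset.sum_le_sum fun j _ => ?_
    have h1 := dot_cs (w Λ j) (Λ *ᵥ w Λ j)
    have h2 : w Λ j ⬝ᵥ w Λ j = 1 := by simpa using w_dot Λ j j
    have h3 : (Λ *ᵥ w Λ j) ⬝ᵥ (Λ *ᵥ w Λ j) = ev Λ j := by simpa using mulVec_w_dot Λ j j
    rw [h2, h3, Real.sqrt_one, one_mul] at h1
    exact h1
  -- Part B : lamNorm Λ D ≤ specNorm D * sqrt (trace Λ)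
  have hlam0 : 0 ≤ ⨆ j, ev D j := by
    rcases isEmpty_or_nonempty (Fin n) with h | h
    · rw [Real.iSup_of_isEmpty]
    · have hj := le_ciSup (f := fun j => ev D j) ((Set.finite_range _).bddAbove)
        (Classical.arbitrary (Fin n))
      exact le_trans (ev_nonneg D _) hj
  have partB : lamNorm Λ D ≤ specNorm D * Real.sqrt Λ.trace := by
    have htr : (D * Λ * Dᵀ).trace = (Sᵀ * (Dᵀ * D) * S).trace := by
      rw [hSsym, Matrix.trace_mul_cycle D Λ Dᵀ, ← hSS, ← Matrix.mul_assoc,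
        Matrix.trace_mul_cycle (Dᵀ * D) S S]
    have hcols : ∑ j, (fun i => S i j) ⬝ᵥ (fun i => S i j) = Λ.trace := by
      have h0 := trace_transpose_mul_mul S (1 : Matrix (Fin n) (Fin n) ℝ)
      rw [Matrix.mul_one, hSsym, hSS] at h0
      simpa [Matrix.one_mulVec] using h0.symm
    have hbound : (Sᵀ * (Dᵀ * D) * S).trace ≤ (⨆ j, ev D j) * Λ.trace := by
      rw [trace_transpose_mul_mul S (Dᵀ * D)]
      calc ∑ j, (fun i => S i j) ⬝ᵥ ((Dᵀ * D) *ᵥ fun i => S i j)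
          ≤ ∑ j, (⨆ j, ev D j) * ((fun i => S i j) ⬝ᵥ fun i => S i j) := by
            refine Finset.sum_le_sum fun j _ => ?_
            have h1 : (fun i => S i j) ⬝ᵥ ((Dᵀ * D) *ᵥ fun i => S i j)
                = (D *ᵥ fun i => S i j) ⬝ᵥ (D *ᵥ fun i => S i j) := by
              rw [dot_mulVec_transpose, Matrix.mulVec_mulVec]
            rw [h1]
            exact rayleigh D _
        _ = (⨆ j, ev D j) * Λ.trace := by rw [← Finset.mul_sum, hcols]
    have hlN : lamNorm Λ D = Real.sqrt ((Sᵀ * (Dᵀ * D) * S).trace) := by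
      unfold lamNorm
      rw [htr]
    rw [hlN]
    refine le_trans (Real.sqrt_le_sqrt hbound) ?_
    rw [Real.sqrt_mul hlam0]
    exact le_of_eq rfl
  -- Part A : nucNorm G ≤ sqrt (trace (G Λ⁻¹ Gᵀ)) * sqrt (trace Λ)
  set M := G * Λ⁻¹ * Gᵀ with hMdef
  have hMpsd : M.PosSemidef := by
    have h := (hΛ.inv.posSemidef).mul_mul_conjTranspose_same G
    rwa [real_conjTranspose] at h
  have ha : ∀ j, (S⁻¹ *ᵥ (Gᵀ *ᵥ uu G j)) ⬝ᵥ (S⁻¹ *ᵥ (Gᵀ *ᵥ uu G j))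
      = uu G j ⬝ᵥ (M *ᵥ uu G j) := by
    intro j
    calc (S⁻¹ *ᵥ (Gᵀ *ᵥ uu G j)) ⬝ᵥ (S⁻¹ *ᵥ (Gᵀ *ᵥ uu G j))
        = (Gᵀ *ᵥ uu G j) ⬝ᵥ ((S⁻¹)ᵀ *ᵥ (S⁻¹ *ᵥ (Gᵀ *ᵥ uu G j))) := dot_mulVec_transpose _ _ _
      _ = (Gᵀ *ᵥ uu G j) ⬝ᵥ (Λ⁻¹ *ᵥ (Gᵀ *ᵥ uu G j)) := by
          rw [hSiT, Matrix.mulVec_mulVec, hSiSi]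
      _ = (Λ⁻¹ *ᵥ (Gᵀ *ᵥ uu G j)) ⬝ᵥ (Gᵀ *ᵥ uu G j) := dotProduct_comm _ _
      _ = (Λ⁻¹ *ᵥ (Gᵀ *ᵥ uu G j)) ⬝ᵥ (Gᵀ *ᵥ uu G j) := rfl
      _ = uu G j ⬝ᵥ (M *ᵥ uu G j) := by
          rw [dotProduct_comm, dot_mulVec_transpose, Matrix.transpose_transpose,
            Matrix.mulVec_mulVec, Matrix.mulVec_mulVec, hMdef, Matrix.mul_assoc]
  have hsumA : ∑ j, uu G j ⬝ᵥ (M *ᵥ uu G j) ≤ M.trace := by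
    have h := trace_transpose_mul_mul (Um G) M
    have hcol : ∀ j, (fun i => Um G i j) = uu G j := fun j => rfl
    have h2 : ∑ j, uu G j ⬝ᵥ (M *ᵥ uu G j) = ((Um G)ᵀ * M * Um G).trace := by
      rw [h]
      simp only [hcol]
    rw [h2]
    exact trace_conj_le hMpsd (Um G) (UmUtU G)
  have hb : ∀ j, (S *ᵥ w G j) ⬝ᵥ (S *ᵥ w G j) = w G j ⬝ᵥ (Λ *ᵥ w G j) := by
    intro j
    rw [dot_mulVec_transpose, hSsym, Matrix.mulVec_mulVec, hSS]
  have hsumB : ∑ j, (S *ᵥ w G j) ⬝ᵥ (S *ᵥ w G j) = Λ.trace := by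
    rw [show ∑ j, (S *ᵥ w G j) ⬝ᵥ (S *ᵥ w G j) = ∑ j, w G j ⬝ᵥ (Λ *ᵥ w G j) from
      Finset.sum_congr rfl fun j _ => hb j]
    exact (trace_eq_sum_w G Λ).symm
  have hstep : nucNorm G ≤ Real.sqrt M.trace * Real.sqrt Λ.trace := by
    have h1 : nucNorm G = ∑ j, sig G j := rfl
    have h2 : ∀ j, sig G j = (S⁻¹ *ᵥ (Gᵀ *ᵥ uu G j)) ⬝ᵥ (S *ᵥ w G j) := by
      intro j
      calc sig G j = uu G j ⬝ᵥ (G *ᵥ w G j) := (uu_dot_mulVec G j).symm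
        _ = (G *ᵥ w G j) ⬝ᵥ uu G j := dotProduct_comm _ _
        _ = w G j ⬝ᵥ (Gᵀ *ᵥ uu G j) := dot_mulVec_transpose _ _ _
        _ = (Gᵀ *ᵥ uu G j) ⬝ᵥ w G j := dotProduct_comm _ _
        _ = (S⁻¹ *ᵥ (Gᵀ *ᵥ uu G j)) ⬝ᵥ (S *ᵥ w G j) := key _ _
    calc nucNorm G = ∑ j, (S⁻¹ *ᵥ (Gᵀ *ᵥ uu G j)) ⬝ᵥ (S *ᵥ w G j) := by
          rw [h1]; exact Finset.sum_congr rfl fun j _ => h2 j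
      _ ≤ ∑ j, Real.sqrt ((S⁻¹ *ᵥ (Gᵀ *ᵥ uu G j)) ⬝ᵥ (S⁻¹ *ᵥ (Gᵀ *ᵥ uu G j)))
            * Real.sqrt ((S *ᵥ w G j) ⬝ᵥ (S *ᵥ w G j)) :=
          Finset.sum_le_sum fun j _ => dot_cs _ _
      _ ≤ Real.sqrt (∑ j, (S⁻¹ *ᵥ (Gᵀ *ᵥ uu G j)) ⬝ᵥ (S⁻¹ *ᵥ (Gᵀ *ᵥ uu G j)))
            * Real.sqrt (∑ j, (S *ᵥ w G j) ⬝ᵥ (S *ᵥ w G j)) :=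
          Real.sum_sqrt_mul_sqrt_le _ (fun j => dot_self_nonneg _) (fun j => dot_self_nonneg _)
      _ ≤ Real.sqrt M.trace * Real.sqrt Λ.trace := by
          refine mul_le_mul (Real.sqrt_le_sqrt ?_) (le_of_eq (congrArg Real.sqrt hsumB))
            (Real.sqrt_nonneg _) (Real.sqrt_nonneg _)
          rw [show ∑ j, (S⁻¹ *ᵥ (Gᵀ *ᵥ uu G j)) ⬝ᵥ (S⁻¹ *ᵥ (Gᵀ *ᵥ uu G j))
              = ∑ j, uu G j ⬝ᵥ (M *ᵥ uu G j) from Finset.sum_congr rfl fun j _ => ha j]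
          exact hsumA
  have hLamM : lamNorm Λ⁻¹ G = Real.sqrt M.trace := by rw [hMdef]; rfl
  calc nucNorm G ≤ Real.sqrt M.trace * Real.sqrt Λ.trace := hstep
    _ = lamNorm Λ⁻¹ G * Real.sqrt Λ.trace := by rw [hLamM]
    _ ≤ lamNorm Λ D * Real.sqrt Λ.trace :=
        mul_le_mul_of_nonneg_right (hsmooth W W') (Real.sqrt_nonneg _)
    _ ≤ (specNorm D * Real.sqrt Λ.trace) * Real.sqrt Λ.trace :=
        mul_le_mul_of_nonneg_right partB (Real.sqrt_nonneg _)
    _ = specNorm D * Λ.trace := by rw [mul_assoc, Real.mul_self_sqrt htrΛ]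
    _ ≤ specNorm D * nucNorm Λ := mul_le_mul_of_nonneg_left partC (Real.sqrt_nonneg _)
    _ = nucNorm Λ * specNorm D := mul_comm _ _
end

section
/- Let f : ℝ^{m×n} → ℝ be twice continuously differentiable and let Λ ∈ ℝ^{n×n} be positive definite. Then f satisfies ‖∇f(W) − ∇f(W')‖_{Λ^{-1}} ≤ ‖W − W'‖_Λ for all W, W' if and only if for all w in ℝ^{mn}, the Hessian of the vectorized function satisfies −I_m ⊗ Λ ⪯ ∇²f_v(w) ⪯ I_m ⊗ Λ. -/
open scoped BigOperators Kronecker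
open Matrix

section Aux

lemma sqrt_cs2 {a₁ a₂ b₁ b₂ : ℝ} (ha₁ : 0 ≤ a₁) (ha₂ : 0 ≤ a₂) (hb₁ : 0 ≤ b₁) (hb₂ : 0 ≤ b₂) :
    Real.sqrt a₁ * Real.sqrt b₁ + Real.sqrt a₂ * Real.sqrt b₂ ≤
      Real.sqrt (a₁ + a₂) * Real.sqrt (b₁ + b₂) := by
  set x1 := Real.sqrt a₁; set x2 := Real.sqrt a₂
  set y1 := Real.sqrt b₁; set y2 := Real.sqrt b₂
  have hx1 : 0 ≤ x1 := Real.sqrt_nonneg _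
  have hx2 : 0 ≤ x2 := Real.sqrt_nonneg _
  have hy1 : 0 ≤ y1 := Real.sqrt_nonneg _
  have hy2 : 0 ≤ y2 := Real.sqrt_nonneg _
  have h : (x1*y1 + x2*y2)^2 ≤ (a₁+a₂)*(b₁+b₂) := by
    have e1 : x1^2 = a₁ := Real.sq_sqrt ha₁
    have e2 : x2^2 = a₂ := Real.sq_sqrt ha₂
    have e3 : y1^2 = b₁ := Real.sq_sqrt hb₁
    have e4 : y2^2 = b₂ := Real.sq_sqrt hb₂
    nlinarith [sq_nonneg (x1*y2 - x2*y1)]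
  calc x1*y1 + x2*y2 = Real.sqrt ((x1*y1 + x2*y2)^2) := (Real.sqrt_sq (by positivity)).symm
    _ ≤ Real.sqrt ((a₁+a₂)*(b₁+b₂)) := Real.sqrt_le_sqrt h
    _ = Real.sqrt (a₁+a₂) * Real.sqrt (b₁+b₂) := Real.sqrt_mul (by positivity) _

lemma cs_psd {ι : Type*} [Fintype ι] {M : Matrix ι ι ℝ} (hM : M.PosSemidef) (u v : ι → ℝ) :
    |u ⬝ᵥ M *ᵥ v| ≤ Real.sqrt (u ⬝ᵥ M *ᵥ u) * Real.sqrt (v ⬝ᵥ M *ᵥ v) := by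
  have hMt : Mᵀ = M := by
    have := hM.1; rwa [Matrix.IsHermitian, conjTranspose_eq_transpose_of_trivial] at this
  have hsym : ∀ x y : ι → ℝ, x ⬝ᵥ M *ᵥ y = y ⬝ᵥ M *ᵥ x := by
    intro x y
    rw [dotProduct_mulVec, ← mulVec_transpose, hMt, dotProduct_comm]
  have hq : ∀ x : ι → ℝ, 0 ≤ x ⬝ᵥ M *ᵥ x := fun x => by simpa using hM.dotProduct_mulVec_nonneg x
  set a := v ⬝ᵥ M *ᵥ v
  set b := u ⬝ᵥ M *ᵥ v
  set c := u ⬝ᵥ M *ᵥ u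
  have hdisc : discrim a (2*b) c ≤ 0 := by
    apply discrim_le_zero
    intro t
    have := hq (u + t • v)
    have expand : (u + t • v) ⬝ᵥ M *ᵥ (u + t • v) = a * (t*t) + (2*b)*t + c := by
      simp only [add_dotProduct, mulVec_add, mulVec_smul, dotProduct_add, dotProduct_smul,
        smul_dotProduct, smul_eq_mul]
      rw [hsym v u]; ring
    linarith [expand ▸ this]
  have hb2 : b^2 ≤ a * c := by
    rw [discrim] at hdisc; nlinarith
  calc |b| = Real.sqrt (b^2) := (Real.sqrt_sq_eq_abs b).symm
    _ ≤ Real.sqrt (c * a) := Real.sqrt_le_sqrt (by nlinarith)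
    _ = Real.sqrt c * Real.sqrt a := Real.sqrt_mul (hq u) _

lemma bdd_form {ι : Type*} [Fintype ι] {K H : Matrix ι ι ℝ}
    (h1 : (K - H).PosSemidef) (h2 : (H + K).PosSemidef) (u v : ι → ℝ) :
    |u ⬝ᵥ H *ᵥ v| ≤ Real.sqrt (u ⬝ᵥ K *ᵥ u) * Real.sqrt (v ⬝ᵥ K *ᵥ v) := by
  have hq1 : ∀ x : ι → ℝ, 0 ≤ x ⬝ᵥ (K - H) *ᵥ x := fun x => by simpa using h1.dotProduct_mulVec_nonneg x
  have hq2 : ∀ x : ι → ℝ, 0 ≤ x ⬝ᵥ (H + K) *ᵥ x := fun x => by simpa using h2.dotProduct_mulVec_nonneg x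
  have key : u ⬝ᵥ H *ᵥ v = (u ⬝ᵥ (H + K) *ᵥ v - u ⬝ᵥ (K - H) *ᵥ v) / 2 := by
    simp only [add_mulVec, sub_mulVec, dotProduct_add, dotProduct_sub]; ring
  have hKq : ∀ x : ι → ℝ, x ⬝ᵥ (K - H) *ᵥ x + x ⬝ᵥ (H + K) *ᵥ x = 2 * (x ⬝ᵥ K *ᵥ x) := by
    intro x
    simp only [add_mulVec, sub_mulVec, dotProduct_add, dotProduct_sub]; ring
  have b1 := cs_psd h1 u v
  have b2 := cs_psd h2 u v
  have sum_bd : Real.sqrt (u ⬝ᵥ (K-H) *ᵥ u) * Real.sqrt (v ⬝ᵥ (K-H) *ᵥ v)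
      + Real.sqrt (u ⬝ᵥ (H+K) *ᵥ u) * Real.sqrt (v ⬝ᵥ (H+K) *ᵥ v)
      ≤ Real.sqrt (2 * (u ⬝ᵥ K *ᵥ u)) * Real.sqrt (2 * (v ⬝ᵥ K *ᵥ v)) := by
    have := sqrt_cs2 (hq1 u) (hq2 u) (hq1 v) (hq2 v)
    rwa [hKq u, hKq v] at this
  have h2sqrt : Real.sqrt (2 * (u ⬝ᵥ K *ᵥ u)) * Real.sqrt (2 * (v ⬝ᵥ K *ᵥ v))
      = 2 * (Real.sqrt (u ⬝ᵥ K *ᵥ u) * Real.sqrt (v ⬝ᵥ K *ᵥ v)) := by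
    rw [Real.sqrt_mul (by norm_num : (0:ℝ) ≤ 2), Real.sqrt_mul (by norm_num : (0:ℝ) ≤ 2)]
    have h22 : Real.sqrt 2 * Real.sqrt 2 = 2 := Real.mul_self_sqrt (by norm_num)
    calc Real.sqrt 2 * Real.sqrt (u ⬝ᵥ K *ᵥ u) * (Real.sqrt 2 * Real.sqrt (v ⬝ᵥ K *ᵥ v))
        = (Real.sqrt 2 * Real.sqrt 2) * (Real.sqrt (u ⬝ᵥ K *ᵥ u) * Real.sqrt (v ⬝ᵥ K *ᵥ v)) := by
          ring
      _ = 2 * (Real.sqrt (u ⬝ᵥ K *ᵥ u) * Real.sqrt (v ⬝ᵥ K *ᵥ v)) := by rw [h22]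
  rw [key, abs_div, abs_two]
  have tri : |u ⬝ᵥ (H + K) *ᵥ v - u ⬝ᵥ (K - H) *ᵥ v|
      ≤ |u ⬝ᵥ (H + K) *ᵥ v| + |u ⬝ᵥ (K - H) *ᵥ v| := abs_sub _ _
  linarith

lemma abs_deriv_le' {φ : ℝ → ℝ} {d C : ℝ} (h : HasDerivAt φ d 0)
    (hb : ∀ t : ℝ, |φ t - φ 0| ≤ C * |t|) : |d| ≤ C := by
  have hs := hasDerivAt_iff_tendsto_slope.mp h
  have habs : Filter.Tendsto (fun t => |slope φ 0 t|) (nhdsWithin 0 {(0:ℝ)}ᶜ) (nhds |d|) :=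
    hs.abs
  refine le_of_tendsto habs ?_
  filter_upwards [self_mem_nhdsWithin] with t ht
  have ht0 : t ≠ 0 := ht
  have hsl : slope φ 0 t = (φ t - φ 0) / t := by
    rw [slope_def_field]; ring_nf
  rw [hsl, abs_div]
  rw [div_le_iff₀ (abs_pos.mpr ht0)]
  exact hb t

lemma hasDerivAt_of_shift {g : ℝ → ℝ} {d t : ℝ} (h : HasDerivAt (fun s => g (t + s)) d 0) :
    HasDerivAt g d t := by
  have h2 : HasDerivAt (fun x : ℝ => x - t) 1 t := by
    simpa using (hasDerivAt_id t).sub_const t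
  have h3 : HasDerivAt ((fun s => g (t + s)) ∘ (fun x : ℝ => x - t)) (d * 1) t :=
    HasDerivAt.comp t (by rw [sub_self]; exact h) h2
  have he : ((fun s => g (t + s)) ∘ (fun x : ℝ => x - t)) = g := by
    funext x; simp only [Function.comp]; congr 1; ring
  rw [he, mul_one] at h3
  exact h3

end Aux

/-- Row-wise vectorization of a matrix. -/
def vecr {m n : ℕ} (A : Matrix (Fin m) (Fin n) ℝ) : Fin m × Fin n → ℝ :=
  fun p => A p.1 p.2

section Aux2

lemma vecr_of {m n : ℕ} (x : Fin m × Fin n → ℝ) :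
    vecr (Matrix.of fun i j => x (i, j)) = x := by
  funext ⟨i, j⟩; rfl

lemma vecr_sub {m n : ℕ} (A B : Matrix (Fin m) (Fin n) ℝ) :
    vecr (A - B) = vecr A - vecr B := by
  funext ⟨i, j⟩; rfl

lemma vecr_smul {m n : ℕ} (t : ℝ) (A : Matrix (Fin m) (Fin n) ℝ) :
    vecr (t • A) = t • vecr A := by
  funext ⟨i, j⟩; rfl

lemma kron_mulVec {m n : ℕ} (B : Matrix (Fin n) (Fin n) ℝ) (A : Matrix (Fin m) (Fin n) ℝ) :
    ((1 : Matrix (Fin m) (Fin m) ℝ) ⊗ₖ B) *ᵥ vecr A = vecr (A * Bᵀ) := by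
  funext ⟨i, j⟩
  simp [Matrix.mulVec, dotProduct, vecr, Fintype.sum_prod_type, Matrix.mul_apply,
    Matrix.one_apply, kroneckerMap_apply, ite_mul, mul_comm]

lemma trace_quad {m n : ℕ} (B : Matrix (Fin n) (Fin n) ℝ) (A : Matrix (Fin m) (Fin n) ℝ) :
    (A * B * Aᵀ).trace = vecr A ⬝ᵥ (((1 : Matrix (Fin m) (Fin m) ℝ) ⊗ₖ B) *ᵥ vecr A) := by
  simp only [Matrix.trace, Matrix.diag, Matrix.mul_apply, dotProduct, Matrix.mulVec, vecr,
    Fintype.sum_prod_type, Matrix.one_apply, kroneckerMap_apply, transpose_apply,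
    Finset.mul_sum, Finset.sum_mul, ite_mul, one_mul, zero_mul]
  congr 1; funext i
  simp only [mul_ite, mul_zero]
  have : ∀ x : Fin n, ∑ x_1 : Fin m, ∑ x_2 : Fin n,
      (if i = x_1 then A i x * (B x x_2 * A x_1 x_2) else 0)
      = ∑ x_2 : Fin n, A i x * (B x x_2 * A i x_2) := by
    intro x
    rw [Finset.sum_comm]
    simp only [Finset.sum_ite_eq, Finset.mem_univ, if_true]
  simp only [this]
  rw [Finset.sum_comm]
  congr 1; funext j
  congr 1; funext l
  ring

lemma sum_eq_dot {m n : ℕ} (X Y : Matrix (Fin m) (Fin n) ℝ) :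
    ∑ i, ∑ j, X i j * Y i j = vecr X ⬝ᵥ vecr Y := by
  simp [dotProduct, Fintype.sum_prod_type, vecr]

lemma trace_rows_nonneg {m n : ℕ} {B : Matrix (Fin n) (Fin n) ℝ} (hB : B.PosSemidef)
    (A : Matrix (Fin m) (Fin n) ℝ) : 0 ≤ (A * B * Aᵀ).trace := by
  have : (A * B * Aᵀ).trace = ∑ i, (A i) ⬝ᵥ B *ᵥ (A i) := by
    simp only [Matrix.trace, Matrix.diag, Matrix.mul_apply, dotProduct, Matrix.mulVec,
      transpose_apply, Finset.sum_mul]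
    congr 1; funext i
    rw [Finset.sum_comm]
    congr 1; funext j
    simp [Finset.mul_sum, dotProduct]
    congr 1; funext l
    ring
  rw [this]
  exact Finset.sum_nonneg fun i _ => by simpa using hB.dotProduct_mulVec_nonneg (A i)

lemma kron_psd {m n : ℕ} {B : Matrix (Fin n) (Fin n) ℝ} (hB : B.PosSemidef) :
    (((1 : Matrix (Fin m) (Fin m) ℝ) ⊗ₖ B)).PosSemidef := by
  have hBt : Bᵀ = B := by
    have := hB.1; rwa [Matrix.IsHermitian, conjTranspose_eq_transpose_of_trivial] at this
  apply Matrix.PosSemidef.of_dotProduct_mulVec_nonneg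
  · show _ᴴ = _
    rw [conjTranspose_eq_transpose_of_trivial]
    ext ⟨i, j⟩ ⟨k, l⟩
    simp only [transpose_apply, kroneckerMap_apply, Matrix.one_apply]
    have hs : B j l = B l j := congrFun (congrFun hBt l) j
    by_cases h : i = k <;> simp [h, eq_comm, hs]
  · intro x
    set A := Matrix.of fun i j => x (i, j)
    have hx : vecr A = x := vecr_of x
    have h0 := trace_rows_nonneg hB A
    rw [trace_quad] at h0
    rw [hx] at h0
    simpa using h0

lemma kron_mul_kron_inv {m n : ℕ} {Λ : Matrix (Fin n) (Fin n) ℝ} (hΛ : Λ.PosDef) :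
    ((1 : Matrix (Fin m) (Fin m) ℝ) ⊗ₖ Λ) * ((1 : Matrix (Fin m) (Fin m) ℝ) ⊗ₖ Λ⁻¹) = 1 := by
  rw [← Matrix.mul_kronecker_mul, Matrix.one_mul, Matrix.mul_nonsing_inv _ hΛ.det_pos.ne'.isUnit,
    Matrix.one_kronecker_one]

lemma kron_inv_mul_kron {m n : ℕ} {Λ : Matrix (Fin n) (Fin n) ℝ} (hΛ : Λ.PosDef) :
    ((1 : Matrix (Fin m) (Fin m) ℝ) ⊗ₖ Λ⁻¹) * ((1 : Matrix (Fin m) (Fin m) ℝ) ⊗ₖ Λ) = 1 := by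
  rw [← Matrix.mul_kronecker_mul, Matrix.one_mul, Matrix.nonsing_inv_mul _ hΛ.det_pos.ne'.isUnit,
    Matrix.one_kronecker_one]

end Aux2

/-- For a twice continuously differentiable `f` with gradient `gradf` and
(symmetric) Hessian `Hess` of the row-wise vectorized function, the
1-Λ-norm Lipschitz smoothness condition holds iff the Hessian satisfies
`−I_m ⊗ Λ ⪯ ∇²f_v(w) ⪯ I_m ⊗ Λ` everywhere (Loewner order). -/
theorem lamSmooth_iff_hessian_kronecker_bounds
    {m n : ℕ} (Λ : Matrix (Fin n) (Fin n) ℝ) (hΛ : Λ.PosDef)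
    (f : Matrix (Fin m) (Fin n) ℝ → ℝ)
    (gradf : Matrix (Fin m) (Fin n) ℝ → Matrix (Fin m) (Fin n) ℝ)
    (Hess : Matrix (Fin m) (Fin n) ℝ →
      Matrix (Fin m × Fin n) (Fin m × Fin n) ℝ)
    (hgrad : ∀ W V : Matrix (Fin m) (Fin n) ℝ,
      HasDerivAt (fun t : ℝ => f (W + t • V)) (∑ i, ∑ j, gradf W i j * V i j) 0)
    (hhess : ∀ W U V : Matrix (Fin m) (Fin n) ℝ,
      HasDerivAt (fun t : ℝ => ∑ i, ∑ j, gradf (W + t • V) i j * U i j)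
        (vecr U ⬝ᵥ (Hess W *ᵥ vecr V)) 0)
    (hsymm : ∀ W, (Hess W)ᵀ = Hess W)
    (hcont : Continuous Hess) :
    (∀ W W' : Matrix (Fin m) (Fin n) ℝ,
        lamNorm Λ⁻¹ (gradf W - gradf W') ≤ lamNorm Λ (W - W')) ↔
    (∀ W : Matrix (Fin m) (Fin n) ℝ,
        (((1 : Matrix (Fin m) (Fin m) ℝ) ⊗ₖ Λ) - Hess W).PosSemidef ∧
        (Hess W + ((1 : Matrix (Fin m) (Fin m) ℝ) ⊗ₖ Λ)).PosSemidef) := by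
  set K : Matrix (Fin m × Fin n) (Fin m × Fin n) ℝ := (1 : Matrix (Fin m) (Fin m) ℝ) ⊗ₖ Λ with hK
  set K' : Matrix (Fin m × Fin n) (Fin m × Fin n) ℝ :=
    (1 : Matrix (Fin m) (Fin m) ℝ) ⊗ₖ Λ⁻¹ with hK'
  have hΛinv : Λ⁻¹.PosDef := hΛ.inv
  have hKpsd : K.PosSemidef := kron_psd hΛ.posSemidef
  have hK'psd : K'.PosSemidef := kron_psd hΛinv.posSemidef
  have hKK' : K * K' = 1 := kron_mul_kron_inv hΛ
  have hK'K : K' * K = 1 := kron_inv_mul_kron hΛ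
  have hqK : ∀ x : Fin m × Fin n → ℝ, 0 ≤ x ⬝ᵥ K *ᵥ x := fun x => by simpa using hKpsd.dotProduct_mulVec_nonneg x
  have hqK' : ∀ x : Fin m × Fin n → ℝ, 0 ≤ x ⬝ᵥ K' *ᵥ x := fun x => by simpa using hK'psd.dotProduct_mulVec_nonneg x
  -- lamNorm descriptions
  have hlamΛ : ∀ A : Matrix (Fin m) (Fin n) ℝ,
      lamNorm Λ A = Real.sqrt (vecr A ⬝ᵥ K *ᵥ vecr A) := by
    intro A; rw [lamNorm, trace_quad]
  have hlamΛ' : ∀ A : Matrix (Fin m) (Fin n) ℝ,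
      lamNorm Λ⁻¹ A = Real.sqrt (vecr A ⬝ᵥ K' *ᵥ vecr A) := by
    intro A; rw [lamNorm, trace_quad]
  -- weighted Cauchy-Schwarz for plain dot products
  have wcs : ∀ d v : Fin m × Fin n → ℝ,
      |d ⬝ᵥ v| ≤ Real.sqrt (d ⬝ᵥ K' *ᵥ d) * Real.sqrt (v ⬝ᵥ K *ᵥ v) := by
    intro d v
    have hv : K' *ᵥ (K *ᵥ v) = v := by
      rw [Matrix.mulVec_mulVec, hK'K, Matrix.one_mulVec]
    have h1 : d ⬝ᵥ v = d ⬝ᵥ K' *ᵥ (K *ᵥ v) := by rw [hv]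
    have h2 := cs_psd hK'psd d (K *ᵥ v)
    rw [← h1] at h2
    have h3 : (K *ᵥ v) ⬝ᵥ K' *ᵥ (K *ᵥ v) = v ⬝ᵥ K *ᵥ v := by
      rw [hv, dotProduct_comm]
    rw [h3] at h2
    exact h2
  constructor
  · -- Lipschitz → Hessian bounds
    intro hL W
    have quad : ∀ v : Fin m × Fin n → ℝ, |v ⬝ᵥ Hess W *ᵥ v| ≤ v ⬝ᵥ K *ᵥ v := by
      intro v
      set V : Matrix (Fin m) (Fin n) ℝ := Matrix.of fun i j => v (i, j) with hV
      have hv : vecr V = v := vecr_of v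
      have hφ : HasDerivAt (fun t : ℝ => ∑ i, ∑ j, gradf (W + t • V) i j * V i j)
          (v ⬝ᵥ Hess W *ᵥ v) 0 := by
        have := hhess W V V
        rwa [hv] at this
      apply abs_deriv_le' hφ
      intro t
      have hsub : ∀ s : ℝ, (∑ i, ∑ j, gradf (W + s • V) i j * V i j)
          = vecr (gradf (W + s • V)) ⬝ᵥ v := by
        intro s; rw [sum_eq_dot, hv]
      rw [hsub t, hsub 0]
      have h00 : W + (0:ℝ) • V = W := by simp
      rw [h00]
      have hdiff : vecr (gradf (W + t • V)) ⬝ᵥ v - vecr (gradf W) ⬝ᵥ v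
          = vecr (gradf (W + t • V) - gradf W) ⬝ᵥ v := by
        rw [vecr_sub, sub_dotProduct]
      rw [hdiff]
      have hb := wcs (vecr (gradf (W + t • V) - gradf W)) v
      have hL' := hL (W + t • V) W
      rw [hlamΛ', hlamΛ] at hL'
      have hWsub : W + t • V - W = t • V := by abel
      rw [hWsub] at hL'
      have htv : vecr (t • V) ⬝ᵥ K *ᵥ vecr (t • V) = t^2 * (v ⬝ᵥ K *ᵥ v) := by
        rw [vecr_smul, hv, smul_dotProduct, Matrix.mulVec_smul, dotProduct_smul]
        simp [smul_eq_mul]; ring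
      have hsq : Real.sqrt (vecr (t • V) ⬝ᵥ K *ᵥ vecr (t • V))
          = |t| * Real.sqrt (v ⬝ᵥ K *ᵥ v) := by
        rw [htv, Real.sqrt_mul (sq_nonneg t), Real.sqrt_sq_eq_abs]
      rw [hsq] at hL'
      calc |vecr (gradf (W + t • V) - gradf W) ⬝ᵥ v|
          ≤ Real.sqrt (vecr (gradf (W + t • V) - gradf W) ⬝ᵥ K' *ᵥ
              vecr (gradf (W + t • V) - gradf W)) * Real.sqrt (v ⬝ᵥ K *ᵥ v) := hb
        _ ≤ (|t| * Real.sqrt (v ⬝ᵥ K *ᵥ v)) * Real.sqrt (v ⬝ᵥ K *ᵥ v) := by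
            apply mul_le_mul_of_nonneg_right hL' (Real.sqrt_nonneg _)
        _ = (v ⬝ᵥ K *ᵥ v) * |t| := by
            rw [mul_assoc, Real.mul_self_sqrt (hqK v)]; ring
    have hermH : (Hess W).IsHermitian := by
      rw [Matrix.IsHermitian, conjTranspose_eq_transpose_of_trivial]
      exact hsymm W
    constructor
    · refine Matrix.PosSemidef.of_dotProduct_mulVec_nonneg (hKpsd.1.sub hermH) (fun x => ?_)
      have := quad x
      have h1 := (abs_le.mp this).2
      simp only [star_trivial, sub_mulVec, dotProduct_sub]
      linarith
    · refine Matrix.PosSemidef.of_dotProduct_mulVec_nonneg (hermH.add hKpsd.1) (fun x => ?_)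
      have := quad x
      have h1 := (abs_le.mp this).1
      simp only [star_trivial, add_mulVec, dotProduct_add]
      linarith
  · -- Hessian bounds → Lipschitz
    intro hB W W'
    set Δ : Matrix (Fin m) (Fin n) ℝ := W - W' with hΔ
    set G : Matrix (Fin m) (Fin n) ℝ := gradf W - gradf W' with hG
    have hΛinvT : Λ⁻¹ᵀ = Λ⁻¹ := by
      have := hΛinv.1
      rwa [Matrix.IsHermitian, conjTranspose_eq_transpose_of_trivial] at this
    set U : Matrix (Fin m) (Fin n) ℝ := G * Λ⁻¹ with hU
    have hu : K' *ᵥ vecr G = vecr U := by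
      rw [hK', kron_mulVec, hΛinvT]
    set gg : ℝ → ℝ := fun t => ∑ i, ∑ j, gradf (W' + t • Δ) i j * U i j with hgg
    set ψ : ℝ → ℝ := fun t => vecr U ⬝ᵥ Hess (W' + t • Δ) *ᵥ vecr Δ with hψ
    have hderiv : ∀ t : ℝ, HasDerivAt gg (ψ t) t := by
      intro t
      apply hasDerivAt_of_shift
      have h1 := hhess (W' + t • Δ) U Δ
      have heq : (fun s : ℝ => ∑ i, ∑ j, gradf (W' + t • Δ + s • Δ) i j * U i j)
          = fun s : ℝ => gg (t + s) := by
        funext s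
        have : W' + t • Δ + s • Δ = W' + (t + s) • Δ := by
          rw [add_smul, add_assoc]
        rw [hgg]; simp only []; rw [this]
      rw [heq] at h1
      exact h1
    have hψcont : Continuous ψ := by
      have hWc : Continuous fun t : ℝ => W' + t • Δ := by
        apply continuous_const.add
        exact continuous_id.smul continuous_const
      have hHc : Continuous fun t : ℝ => Hess (W' + t • Δ) := hcont.comp hWc
      show Continuous fun t : ℝ =>
        ∑ p : Fin m × Fin n, vecr U p * ∑ q : Fin m × Fin n, Hess (W' + t • Δ) p q * vecr Δ q
      apply continuous_finset_sum
      intro p _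
      apply Continuous.mul continuous_const
      apply continuous_finset_sum
      intro q _
      exact (((continuous_apply q).comp ((continuous_apply p).comp hHc)).mul continuous_const)
    have hFTC : ∫ t in (0:ℝ)..1, ψ t = gg 1 - gg 0 :=
      intervalIntegral.integral_eq_sub_of_hasDerivAt (fun t _ => hderiv t)
        (hψcont.intervalIntegrable 0 1)
    set a : ℝ := vecr G ⬝ᵥ K' *ᵥ vecr G with ha_def
    set b : ℝ := vecr Δ ⬝ᵥ K *ᵥ vecr Δ with hb_def
    have ha : 0 ≤ a := hqK' _
    have hbnn : 0 ≤ b := hqK _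
    have huKu : vecr U ⬝ᵥ K *ᵥ vecr U = a := by
      rw [← hu, Matrix.mulVec_mulVec]
      have : (K * K') *ᵥ vecr G = vecr G := by rw [hKK', Matrix.one_mulVec]
      rw [this, dotProduct_comm]
    have hbound : ∀ x ∈ Set.uIoc (0:ℝ) 1, ‖ψ x‖ ≤ Real.sqrt a * Real.sqrt b := by
      intro x _
      obtain ⟨p1, p2⟩ := hB (W' + x • Δ)
      have := bdd_form p1 p2 (vecr U) (vecr Δ)
      rw [huKu] at this
      simpa [Real.norm_eq_abs] using this
    have hintbd : |∫ t in (0:ℝ)..1, ψ t| ≤ Real.sqrt a * Real.sqrt b := by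
      have := intervalIntegral.norm_integral_le_of_norm_le_const hbound
      simpa using this
    have hgg1 : gg 1 = vecr (gradf W) ⬝ᵥ vecr U := by
      rw [hgg]; simp only []
      have : W' + (1:ℝ) • Δ = W := by rw [one_smul, hΔ]; abel
      rw [this, sum_eq_dot]
    have hgg0 : gg 0 = vecr (gradf W') ⬝ᵥ vecr U := by
      rw [hgg]; simp only []
      have : W' + (0:ℝ) • Δ = W' := by simp
      rw [this, sum_eq_dot]
    have hdiff : gg 1 - gg 0 = a := by
      rw [hgg1, hgg0, ← sub_dotProduct, ← vecr_sub, ← hG, ← hu]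
    have hfin : a ≤ Real.sqrt a * Real.sqrt b := by
      have h2 := le_trans (le_abs_self (∫ t in (0:ℝ)..1, ψ t)) hintbd
      rw [hFTC, hdiff] at h2
      exact h2
    have hsqrt : Real.sqrt a ≤ Real.sqrt b := by
      rcases eq_or_lt_of_le (Real.sqrt_nonneg a) with h0 | h0
      · rw [← h0]; exact Real.sqrt_nonneg b
      · have haa : Real.sqrt a * Real.sqrt a = a := Real.mul_self_sqrt ha
        have : Real.sqrt a * Real.sqrt a ≤ Real.sqrt a * Real.sqrt b := by
          rw [haa]; exact hfin
        exact le_of_mul_le_mul_left this h0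
    rw [hlamΛ', hlamΛ]
    exact hsqrt
end

section
/- Let f : ℝ^{m×n} → ℝ be differentiable and L-Lipschitz smooth in Frobenius norm, and let r = min(m,n). For the Muon update W' = W − η·UV^T, where UV^T is obtained from the thin SVD of ∇f(W) = U S V^T, one has f(W') ≤ f(W) − η‖∇f(W)‖_* + (r L η²)/2. -/
open scoped BigOperators
open Matrix

/-- Frobenius norm of a real matrix. -/
noncomputable def frobNorm {m n : ℕ} (A : Matrix (Fin m) (Fin n) ℝ) : ℝ :=
  Real.sqrt (∑ i, ∑ j, (A i j) ^ 2)

lemma frobNorm_nonneg {m n : ℕ} (A : Matrix (Fin m) (Fin n) ℝ) : 0 ≤ frobNorm A :=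
  Real.sqrt_nonneg _

lemma sq_frobNorm {m n : ℕ} (A : Matrix (Fin m) (Fin n) ℝ) :
    frobNorm A ^ 2 = ∑ i, ∑ j, (A i j) ^ 2 := by
  rw [frobNorm, Real.sq_sqrt]
  exact Finset.sum_nonneg fun i _ => Finset.sum_nonneg fun j _ => sq_nonneg _

lemma frobCS {m n : ℕ} (A B : Matrix (Fin m) (Fin n) ℝ) :
    ∑ i, ∑ j, A i j * B i j ≤ frobNorm A * frobNorm B := by
  have h1 : ∑ i, ∑ j, A i j * B i j = ∑ p : Fin m × Fin n, A p.1 p.2 * B p.1 p.2 := by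
    rw [Fintype.sum_prod_type]
  have h2 : (∑ p : Fin m × Fin n, A p.1 p.2 * B p.1 p.2) ^ 2 ≤
      (∑ p : Fin m × Fin n, A p.1 p.2 ^ 2) * ∑ p : Fin m × Fin n, B p.1 p.2 ^ 2 :=
    Finset.sum_mul_sq_le_sq_mul_sq _ _ _
  have hA : (∑ p : Fin m × Fin n, A p.1 p.2 ^ 2) = frobNorm A ^ 2 := by
    rw [sq_frobNorm, Fintype.sum_prod_type]
  have hB : (∑ p : Fin m × Fin n, B p.1 p.2 ^ 2) = frobNorm B ^ 2 := by
    rw [sq_frobNorm, Fintype.sum_prod_type]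
  rw [h1]
  calc ∑ p : Fin m × Fin n, A p.1 p.2 * B p.1 p.2
      ≤ |∑ p : Fin m × Fin n, A p.1 p.2 * B p.1 p.2| := le_abs_self _
    _ = Real.sqrt ((∑ p : Fin m × Fin n, A p.1 p.2 * B p.1 p.2) ^ 2) := (Real.sqrt_sq_eq_abs _).symm
    _ ≤ Real.sqrt ((frobNorm A ^ 2) * (frobNorm B ^ 2)) := by
        apply Real.sqrt_le_sqrt; rw [← hA, ← hB]; exact h2
    _ = frobNorm A * frobNorm B := by
        rw [Real.sqrt_mul (sq_nonneg _), Real.sqrt_sq (frobNorm_nonneg A),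
          Real.sqrt_sq (frobNorm_nonneg B)]

lemma frobNorm_smul {m n : ℕ} (t : ℝ) (ht : 0 ≤ t) (A : Matrix (Fin m) (Fin n) ℝ) :
    frobNorm (t • A) = t * frobNorm A := by
  simp only [frobNorm, Matrix.smul_apply, smul_eq_mul, mul_pow, ← Finset.mul_sum]
  rw [Real.sqrt_mul (sq_nonneg t), Real.sqrt_sq ht]

lemma frob_trace_transpose_mul {m n : ℕ} (A B : Matrix (Fin m) (Fin n) ℝ) :
    Matrix.trace (Aᵀ * B) = ∑ i, ∑ j, A i j * B i j := by
  rw [Finset.sum_comm]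
  simp [Matrix.trace, Matrix.diag, Matrix.mul_apply, Matrix.transpose_apply]

lemma ct_eq_t {m n : ℕ} (A : Matrix (Fin m) (Fin n) ℝ) : Aᴴ = Aᵀ := by
  ext i j; simp [Matrix.conjTranspose_apply]

open scoped MatrixOrder in
lemma trace_psd_sqrt {n : ℕ} {B : Matrix (Fin n) (Fin n) ℝ} (hB : B.PosSemidef) :
    Matrix.trace (CFC.sqrt B) = ∑ j, Real.sqrt (hB.1.eigenvalues j) := by
  rw [CFC.sqrt_eq_cfc, cfc_nnreal_eq_real _ B, hB.1.cfc_eq, Matrix.IsHermitian.cfc,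
    Unitary.conjStarAlgAut_apply, Matrix.trace_mul_comm, ← Matrix.mul_assoc,
    Unitary.coe_star_mul_self, Matrix.one_mul, Matrix.trace_diagonal]
  simp [max_eq_left (hB.eigenvalues_nonneg _)]

open scoped MatrixOrder in
lemma nucNorm_svd {m n k : ℕ}
    (U : Matrix (Fin m) (Fin k) ℝ) (V : Matrix (Fin n) (Fin k) ℝ)
    (σ : Fin k → ℝ) (hσ : ∀ i, 0 < σ i)
    (hU : Uᵀ * U = 1) (hV : Vᵀ * V = 1) :
    nucNorm (U * Matrix.diagonal σ * Vᵀ) = ∑ i, σ i := by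
  set A := U * Matrix.diagonal σ * Vᵀ with hA
  have hB : (Aᴴ * A).PosSemidef := Matrix.posSemidef_conjTranspose_mul_self A
  set C := V * Matrix.diagonal σ * Vᵀ with hCdef
  have hCps : C.PosSemidef := by
    have : C = V * Matrix.diagonal σ * Vᴴ := by rw [ct_eq_t]
    rw [this]
    exact Matrix.PosSemidef.mul_mul_conjTranspose_same
      (Matrix.posSemidef_diagonal_iff.mpr fun i => (hσ i).le) V
  have hC2 : C ^ 2 = Aᴴ * A := by
    rw [ct_eq_t, hA, hCdef, pow_two]
    simp only [Matrix.transpose_mul, Matrix.transpose_transpose, Matrix.diagonal_transpose]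
    calc V * Matrix.diagonal σ * Vᵀ * (V * Matrix.diagonal σ * Vᵀ)
        = V * Matrix.diagonal σ * (Vᵀ * V) * Matrix.diagonal σ * Vᵀ := by
          simp only [Matrix.mul_assoc]
      _ = V * Matrix.diagonal σ * Matrix.diagonal σ * Vᵀ := by rw [hV, Matrix.mul_one]
      _ = V * Matrix.diagonal σ * (Uᵀ * U) * Matrix.diagonal σ * Vᵀ := by rw [hU, Matrix.mul_one]
      _ = V * Matrix.diagonal σ * Uᵀ * (U * (Matrix.diagonal σ * Vᵀ)) := by
          simp only [Matrix.mul_assoc]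
      _ = _ := by simp only [Matrix.mul_assoc]
  have hCsqrt : C = CFC.sqrt (Aᴴ * A) :=
    (CFC.sqrt_unique (by rw [← pow_two]; exact hC2) hCps.nonneg).symm
  have h1 : nucNorm A = Matrix.trace (CFC.sqrt (Aᴴ * A)) := by
    rw [trace_psd_sqrt hB, nucNorm]
  rw [h1, ← hCsqrt, hCdef, Matrix.trace_mul_comm, ← Matrix.mul_assoc, hV,
    Matrix.one_mul, Matrix.trace_diagonal]

lemma k_le_of_semiorth {m k : ℕ} (U : Matrix (Fin m) (Fin k) ℝ) (hU : Uᵀ * U = 1) : k ≤ m := by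
  have h1 : ((1 : Matrix (Fin k) (Fin k) ℝ)).rank = k := by
    simp [Matrix.rank_one]
  have h2 : (Uᵀ * U).rank ≤ U.rank := Matrix.rank_mul_le_right _ _
  have h3 : U.rank ≤ m := by
    have := Matrix.rank_le_card_height U
    simpa using this
  rw [hU, h1] at h2
  omega

lemma descent {m n : ℕ} (f : Matrix (Fin m) (Fin n) ℝ → ℝ)
    (gradf : Matrix (Fin m) (Fin n) ℝ → Matrix (Fin m) (Fin n) ℝ)
    (hgrad : ∀ W V : Matrix (Fin m) (Fin n) ℝ,
      HasDerivAt (fun t : ℝ => f (W + t • V)) (∑ i, ∑ j, gradf W i j * V i j) 0)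
    (L : ℝ)
    (hLip : ∀ W W' : Matrix (Fin m) (Fin n) ℝ,
      frobNorm (gradf W - gradf W') ≤ L * frobNorm (W - W'))
    (W D : Matrix (Fin m) (Fin n) ℝ) :
    f (W + D) ≤ f W + (∑ i, ∑ j, gradf W i j * D i j) + L * frobNorm D ^ 2 / 2 := by
  set g : ℝ → ℝ := fun t => f (W + t • D) with hgdef
  set φ : ℝ → ℝ := fun t => ∑ i, ∑ j, gradf (W + t • D) i j * D i j with hφdef
  have hg : ∀ s : ℝ, HasDerivAt g (φ s) s := by
    intro s
    have h0 : HasDerivAt (fun t : ℝ => f (W + s • D + t • D)) (φ s) 0 :=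
      hgrad (W + s • D) D
    have hshift : HasDerivAt (fun u : ℝ => u - s) 1 s := (hasDerivAt_id s).sub_const s
    have h1 : HasDerivAt (fun u : ℝ => f (W + s • D + (u - s) • D)) (φ s * 1) s := by
      have hs0 : s - s = 0 := sub_self s
      exact HasDerivAt.comp s (hs0 ▸ h0) hshift
    have heq : (fun u : ℝ => f (W + s • D + (u - s) • D)) = g := by
      funext u
      have : W + s • D + (u - s) • D = W + u • D := by rw [sub_smul]; abel
      rw [hgdef]; simp only [this]
    rw [heq, mul_one] at h1
    exact h1
  set c : ℝ := φ 0 with hcdef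
  set q : ℝ := L * frobNorm D ^ 2 with hqdef
  set h : ℝ → ℝ := fun t => g t - c * t - q * t ^ 2 / 2 with hhdef
  have hh : ∀ t : ℝ, HasDerivAt h (φ t - c - q * t) t := by
    intro t
    have h1 : HasDerivAt (fun t : ℝ => c * t) c t := by
      simpa using (hasDerivAt_id t).const_mul c
    have h2 : HasDerivAt (fun t : ℝ => q * t ^ 2 / 2) (q * t) t := by
      have := ((hasDerivAt_pow 2 t).const_mul q).div_const 2
      exact this.congr_deriv (by norm_num; ring)
    exact ((hg t).sub h1).sub h2
  have hφc : ∀ x : ℝ, 0 ≤ x → φ x - c ≤ q * x := by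
    intro x hx
    have e1 : φ x - c = ∑ i, ∑ j, (gradf (W + x • D) - gradf W) i j * D i j := by
      simp only [hφdef, hcdef, Matrix.sub_apply, sub_mul, Finset.sum_sub_distrib]
      simp
    have e2 := frobCS (gradf (W + x • D) - gradf W) D
    have e3 : frobNorm (gradf (W + x • D) - gradf W) ≤ L * (x * frobNorm D) := by
      have := hLip (W + x • D) W
      rwa [add_sub_cancel_left, frobNorm_smul x hx] at this
    calc φ x - c ≤ frobNorm (gradf (W + x • D) - gradf W) * frobNorm D := by rw [e1]; exact e2
      _ ≤ L * (x * frobNorm D) * frobNorm D :=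
          mul_le_mul_of_nonneg_right e3 (frobNorm_nonneg D)
      _ = q * x := by rw [hqdef]; ring
  have hanti : AntitoneOn h (Set.Icc (0:ℝ) 1) := by
    apply antitoneOn_of_deriv_nonpos (convex_Icc 0 1)
    · exact fun x _ => ((hh x).continuousAt).continuousWithinAt
    · intro x hx
      exact ((hh x).differentiableAt).differentiableWithinAt
    · intro x hx
      rw [interior_Icc] at hx
      rw [(hh x).deriv]
      have := hφc x hx.1.le
      linarith
  have h10 : h 1 ≤ h 0 := hanti (Set.left_mem_Icc.mpr zero_le_one)
    (Set.right_mem_Icc.mpr zero_le_one) zero_le_one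
  have h0v : h 0 = f W := by simp [hhdef, hgdef]
  have h1v : h 1 = f (W + D) - c - q / 2 := by simp [hhdef, hgdef]
  rw [h0v, h1v] at h10
  have : c = ∑ i, ∑ j, gradf W i j * D i j := by simp [hcdef, hφdef]
  rw [this] at h10
  rw [hqdef] at h10
  linarith

/-- Descent lemma for the Muon update under `L`-Lipschitz smoothness in
Frobenius norm, where `U Vᵀ` comes from the thin SVD of `∇f(W)` and
`r = min (m, n)`. -/
theorem muon_descent_frobenius_smooth
    {m n k : ℕ} (f : Matrix (Fin m) (Fin n) ℝ → ℝ)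
    (gradf : Matrix (Fin m) (Fin n) ℝ → Matrix (Fin m) (Fin n) ℝ)
    (hgrad : ∀ W V : Matrix (Fin m) (Fin n) ℝ,
      HasDerivAt (fun t : ℝ => f (W + t • V)) (∑ i, ∑ j, gradf W i j * V i j) 0)
    (L : ℝ) (hL : 0 ≤ L)
    (hLip : ∀ W W' : Matrix (Fin m) (Fin n) ℝ,
      frobNorm (gradf W - gradf W') ≤ L * frobNorm (W - W'))
    (η : ℝ) (hη : 0 ≤ η)
    (W : Matrix (Fin m) (Fin n) ℝ)
    (U : Matrix (Fin m) (Fin k) ℝ) (V : Matrix (Fin n) (Fin k) ℝ)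
    (σ : Fin k → ℝ) (hσ : ∀ i, 0 < σ i)
    (hU : Uᵀ * U = 1) (hV : Vᵀ * V = 1)
    (hSVD : gradf W = U * Matrix.diagonal σ * Vᵀ) :
    f (W - η • (U * Vᵀ)) ≤
      f W - η * nucNorm (gradf W) + (min m n : ℝ) * L * η ^ 2 / 2 := by
  set D : Matrix (Fin m) (Fin n) ℝ := (-η) • (U * Vᵀ) with hDdef
  have hWD : W - η • (U * Vᵀ) = W + D := by
    rw [hDdef, neg_smul]; abel
  have hmain := descent f gradf hgrad L hLip W D
  -- inner product term
  have hσsum : ∑ i, ∑ j, gradf W i j * (U * Vᵀ) i j = ∑ i, σ i := by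
    rw [← frob_trace_transpose_mul, hSVD]
    simp only [Matrix.transpose_mul, Matrix.transpose_transpose, Matrix.diagonal_transpose]
    calc Matrix.trace (Vᵀᵀ * (Matrix.diagonal σ * Uᵀ) * (U * Vᵀ))
        = Matrix.trace (V * Matrix.diagonal σ * (Uᵀ * U) * Vᵀ) := by
          simp only [Matrix.transpose_transpose, Matrix.mul_assoc]
      _ = Matrix.trace (V * Matrix.diagonal σ * Vᵀ) := by rw [hU, Matrix.mul_one]
      _ = Matrix.trace (Matrix.diagonal σ * (Vᵀ * V)) := by
          rw [Matrix.mul_assoc, Matrix.trace_mul_comm, Matrix.mul_assoc]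
      _ = ∑ i, σ i := by rw [hV, Matrix.mul_one, Matrix.trace_diagonal]
  have hinner : ∑ i, ∑ j, gradf W i j * D i j = -η * ∑ i, σ i := by
    rw [hDdef]
    simp only [Matrix.smul_apply, smul_eq_mul]
    rw [← hσsum]
    simp only [Finset.mul_sum]
    congr 1; funext i; congr 1; funext j; ring
  -- frobenius norm of D
  have hUVsq : ∑ i, ∑ j, ((U * Vᵀ) i j) ^ 2 = (k : ℝ) := by
    have : ∑ i, ∑ j, ((U * Vᵀ) i j) ^ 2 = ∑ i, ∑ j, (U * Vᵀ) i j * (U * Vᵀ) i j := by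
      simp [sq]
    rw [this, ← frob_trace_transpose_mul]
    calc Matrix.trace ((U * Vᵀ)ᵀ * (U * Vᵀ))
        = Matrix.trace (V * (Uᵀ * U) * Vᵀ) := by
          simp only [Matrix.transpose_mul, Matrix.transpose_transpose, Matrix.mul_assoc]
      _ = Matrix.trace (V * Vᵀ) := by rw [hU, Matrix.mul_one]
      _ = Matrix.trace (Vᵀ * V) := Matrix.trace_mul_comm _ _
      _ = (k : ℝ) := by rw [hV]; simp [Matrix.trace_one]
  have hDsq : frobNorm D ^ 2 = η ^ 2 * k := by
    rw [sq_frobNorm, hDdef]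
    simp only [Matrix.smul_apply, smul_eq_mul, mul_pow, ← Finset.mul_sum]
    rw [hUVsq]
    ring
  -- nuclear norm
  have hnuc : nucNorm (gradf W) = ∑ i, σ i := by
    rw [hSVD]; exact nucNorm_svd U V σ hσ hU hV
  -- k ≤ min m n
  have hkm : k ≤ m := k_le_of_semiorth U hU
  have hkn : k ≤ n := k_le_of_semiorth V hV
  have hk : (k : ℝ) ≤ (min m n : ℝ) := by
    have : k ≤ min m n := le_min hkm hkn
    exact_mod_cast this
  have hfinal : L * frobNorm D ^ 2 / 2 ≤ (min m n : ℝ) * L * η ^ 2 / 2 := by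
    rw [hDsq]
    have h1 : L * (η ^ 2 * k) ≤ L * (η ^ 2 * (min m n : ℝ)) := by
      apply mul_le_mul_of_nonneg_left _ hL
      exact mul_le_mul_of_nonneg_left hk (sq_nonneg η)
    nlinarith
  rw [hWD]
  calc f (W + D) ≤ f W + (∑ i, ∑ j, gradf W i j * D i j) + L * frobNorm D ^ 2 / 2 := hmain
    _ = f W - η * nucNorm (gradf W) + L * frobNorm D ^ 2 / 2 := by
        rw [hinner, hnuc]; ring
    _ ≤ f W - η * nucNorm (gradf W) + (min m n : ℝ) * L * η ^ 2 / 2 := by linarith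
end

section
/- Let f : ℝ^{m×n} → ℝ be differentiable and L_*-spectral-norm Lipschitz smooth (satisfying f(Y) ≤ f(X) + ⟨∇f(X), Y−X⟩ + (L_*/2)‖Y−X‖_op² for all X, Y). For the Muon update W' = W − η·UV^T with UV^T from the thin SVD of ∇f(W), one has f(W') ≤ f(W) − η‖∇f(W)‖_* + (L_* η²)/2. -/
open scoped BigOperators
open Matrix
open scoped RealInnerProductSpace
open scoped MatrixOrder

lemma trace_sqrt_s12 {n : ℕ} {A : Matrix (Fin n) (Fin n) ℝ} (hA : PosSemidef A) :
    (CFC.sqrt A).trace = ∑ i, Real.sqrt (hA.1.eigenvalues i) := by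
  rw [CFC.sqrt_eq_cfc, cfc_nnreal_eq_real _ A hA.nonneg, hA.1.cfc_eq, IsHermitian.cfc,
    Unitary.conjStarAlgAut_apply, Matrix.trace_mul_cycle,
    Unitary.coe_star_mul_self hA.1.eigenvectorUnitary, one_mul, Matrix.trace_diagonal]
  simp [Real.coe_sqrt, hA.eigenvalues_nonneg]

lemma eigenvalues_le {n : ℕ} {M : Matrix (Fin n) (Fin n) ℝ} (hM : M.IsHermitian) {c : ℝ}
    (h : PosSemidef (c • (1 : Matrix (Fin n) (Fin n) ℝ) - M)) (i : Fin n) :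
    hM.eigenvalues i ≤ c := by
  set v : Fin n → ℝ := ⇑(hM.eigenvectorBasis i) with hv
  have h1 : dotProduct v v = 1 := by
    have := hM.eigenvectorBasis.orthonormal.1 i
    have h2 : (inner ℝ (hM.eigenvectorBasis i) (hM.eigenvectorBasis i) : ℝ) = 1 := by
      rw [real_inner_self_eq_norm_sq, this]; norm_num
    rw [EuclideanSpace.inner_eq_star_dotProduct] at h2
    simpa using h2
  have hm := hM.mulVec_eigenvectorBasis i
  have := h.dotProduct_mulVec_nonneg v
  rw [sub_mulVec, smul_mulVec, one_mulVec, hm, dotProduct_sub,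
    dotProduct_smul, dotProduct_smul] at this
  simp only [← hv, star_trivial, h1, smul_eq_mul, mul_one, RCLike.re_to_real] at this
  linarith

lemma posSemidef_smul_of_nonneg {n : ℕ} {A : Matrix (Fin n) (Fin n) ℝ}
    (hA : PosSemidef A) {c : ℝ} (hc : 0 ≤ c) : PosSemidef (c • A) := by
  constructor
  · show (c • A)ᴴ = c • A
    rw [Matrix.conjTranspose_smul, hA.1.eq, star_trivial]
  · intro x
    exact (hA.smul hc).2 x

/-- Descent lemma for the Muon update under `L_*`-spectral-norm Lipschitz
smoothness (expressed via the quadratic upper bound). -/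
theorem muon_descent_spectral_smooth
    {m n k : ℕ} (f : Matrix (Fin m) (Fin n) ℝ → ℝ)
    (gradf : Matrix (Fin m) (Fin n) ℝ → Matrix (Fin m) (Fin n) ℝ)
    (hgrad : ∀ W V : Matrix (Fin m) (Fin n) ℝ,
      HasDerivAt (fun t : ℝ => f (W + t • V)) (∑ i, ∑ j, gradf W i j * V i j) 0)
    (Lstar : ℝ) (hL : 0 ≤ Lstar)
    (hquad : ∀ X Y : Matrix (Fin m) (Fin n) ℝ,
      f Y ≤ f X + (∑ i, ∑ j, gradf X i j * (Y - X) i j)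
        + Lstar / 2 * (specNorm (Y - X)) ^ 2)
    (η : ℝ) (hη : 0 ≤ η)
    (W : Matrix (Fin m) (Fin n) ℝ)
    (U : Matrix (Fin m) (Fin k) ℝ) (V : Matrix (Fin n) (Fin k) ℝ)
    (σ : Fin k → ℝ) (hσ : ∀ i, 0 < σ i)
    (hU : Uᵀ * U = 1) (hV : Vᵀ * V = 1)
    (hSVD : gradf W = U * Matrix.diagonal σ * Vᵀ) :
    f (W - η • (U * Vᵀ)) ≤
      f W - η * nucNorm (gradf W) + Lstar * η ^ 2 / 2 := by
  classical
  set A := gradf W with hA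
  set M := U * Vᵀ with hM
  set D := Matrix.diagonal σ with hD
  have hsub : W - η • M - W = (-η) • M := by
    rw [neg_smul]; abel
  -- basic products
  have hMtM : Mᵀ * M = V * Vᵀ := by
    rw [hM, Matrix.transpose_mul, Matrix.transpose_transpose, Matrix.mul_assoc,
      ← Matrix.mul_assoc Uᵀ U Vᵀ, hU, Matrix.one_mul]
  have hAt : Aᵀ = V * D * Uᵀ := by
    rw [hSVD, Matrix.transpose_mul, Matrix.transpose_mul, Matrix.transpose_transpose,
      hD, Matrix.diagonal_transpose, Matrix.mul_assoc]
  have hAtM : Aᵀ * M = V * D * Vᵀ := by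
    rw [hAt, hM, Matrix.mul_assoc (V * D) Uᵀ (U * Vᵀ), ← Matrix.mul_assoc Uᵀ U Vᵀ, hU,
      Matrix.one_mul]
  have hAtA : Aᵀ * A = V * D * (D * Vᵀ) := by
    rw [hAt, hSVD, Matrix.mul_assoc (V * D) Uᵀ (U * Matrix.diagonal σ * Vᵀ), hD,
      Matrix.mul_assoc U (Matrix.diagonal σ) Vᵀ, ← Matrix.mul_assoc Uᵀ U _, hU, Matrix.one_mul]
  have htraceVDVt : (V * D * Vᵀ).trace = ∑ i, σ i := by
    rw [Matrix.trace_mul_cycle, hV, Matrix.one_mul, hD, Matrix.trace_diagonal]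
  -- the inner product term
  have hinner : (∑ i, ∑ j, A i j * M i j) = ∑ i, σ i := by
    have : (∑ i, ∑ j, A i j * M i j) = (Aᵀ * M).trace := by
      rw [Matrix.trace]
      simp only [Matrix.diag, Matrix.mul_apply, Matrix.transpose_apply]
      exact Finset.sum_comm
    rw [this, hAtM, htraceVDVt]
  -- nuclear norm equals sum of sigma
  have hPSD : (Aᵀ * A).PosSemidef := by
    rw [← Matrix.conjTranspose_eq_transpose_of_trivial]
    exact Matrix.posSemidef_conjTranspose_mul_self A
  have hBpsd : (V * D * Vᵀ).PosSemidef := by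
    have h := Matrix.posSemidef_self_mul_conjTranspose
      (V * Matrix.diagonal (fun i => Real.sqrt (σ i)))
    have heq : (V * Matrix.diagonal (fun i => Real.sqrt (σ i))) *
        (V * Matrix.diagonal (fun i => Real.sqrt (σ i)))ᴴ = V * D * Vᵀ := by
      rw [Matrix.conjTranspose_eq_transpose_of_trivial, Matrix.transpose_mul,
        Matrix.diagonal_transpose, Matrix.mul_assoc V _ _,
        ← Matrix.mul_assoc (Matrix.diagonal fun i => Real.sqrt (σ i)) _ Vᵀ,
        Matrix.diagonal_mul_diagonal, ← Matrix.mul_assoc,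
        show (fun i => Real.sqrt (σ i) * Real.sqrt (σ i)) = σ from
          funext fun i => Real.mul_self_sqrt (hσ i).le, ← hD]
    rwa [heq] at h
  have hBsq : (V * D * Vᵀ) ^ 2 = Aᵀ * A := by
    rw [pow_two, hAtA, Matrix.mul_assoc (V * D) Vᵀ (V * D * Vᵀ),
      ← Matrix.mul_assoc Vᵀ (V * D) Vᵀ, ← Matrix.mul_assoc Vᵀ V D, hV, Matrix.one_mul]
  have hsqrt : V * D * Vᵀ = CFC.sqrt (Aᵀ * A) :=
    (CFC.sqrt_unique (by rw [← sq]; exact hBsq) hBpsd.nonneg).symm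
  have hnuc : nucNorm A = ∑ i, σ i := by
    have h1 : nucNorm A = ∑ j, Real.sqrt (hPSD.1.eigenvalues j) := rfl
    rw [h1, ← trace_sqrt_s12 hPSD, ← hsqrt, htraceVDVt]
  -- spectral norm bound
  have hspec : specNorm ((-η) • M) ^ 2 ≤ η ^ 2 := by
    set N := (-η) • M with hN
    have hNtN : Nᵀ * N = (η ^ 2) • (V * Vᵀ) := by
      rw [hN, Matrix.transpose_smul, Matrix.smul_mul, Matrix.mul_smul, smul_smul, hMtM]
      ring_nf
    have hproj : (1 - V * Vᵀ) * (1 - V * Vᵀ)ᴴ = 1 - V * Vᵀ := by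
      rw [Matrix.conjTranspose_eq_transpose_of_trivial, Matrix.transpose_sub,
        Matrix.transpose_one, Matrix.transpose_mul, Matrix.transpose_transpose]
      have : (V * Vᵀ) * (V * Vᵀ) = V * Vᵀ := by
        rw [Matrix.mul_assoc, ← Matrix.mul_assoc Vᵀ V Vᵀ, hV, Matrix.one_mul]
      rw [Matrix.sub_mul, Matrix.mul_sub, Matrix.mul_sub, this]
      simp only [Matrix.one_mul, Matrix.mul_one]
      abel
    have hprojPSD : PosSemidef ((1 : Matrix (Fin n) (Fin n) ℝ) - V * Vᵀ) := by
      have h := Matrix.posSemidef_self_mul_conjTranspose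
        ((1 : Matrix (Fin n) (Fin n) ℝ) - V * Vᵀ)
      rwa [hproj] at h
    have hub : PosSemidef ((η ^ 2) • (1 : Matrix (Fin n) (Fin n) ℝ) - Nᵀ * N) := by
      rw [hNtN, ← smul_sub]
      exact posSemidef_smul_of_nonneg hprojPSD (sq_nonneg η)
    have hNpsd : (Nᵀ * N).PosSemidef := by
      rw [← Matrix.conjTranspose_eq_transpose_of_trivial]
      exact Matrix.posSemidef_conjTranspose_mul_self N
    have hev_le : ∀ j, (Matrix.isHermitian_conjTranspose_mul_self N).eigenvalues j ≤ η ^ 2 :=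
      fun j => eigenvalues_le (Matrix.isHermitian_conjTranspose_mul_self N) hub j
    have hsup_le : (⨆ j, (Matrix.isHermitian_conjTranspose_mul_self N).eigenvalues j) ≤ η ^ 2 :=
      Real.iSup_le hev_le (sq_nonneg η)
    have hsup_nonneg : 0 ≤ ⨆ j, (Matrix.isHermitian_conjTranspose_mul_self N).eigenvalues j :=
      Real.iSup_nonneg fun j => hNpsd.eigenvalues_nonneg j
    rw [specNorm, Real.sq_sqrt hsup_nonneg]
    exact hsup_le
  -- put it together
  have h := hquad W (W - η • M)
  rw [hsub] at h
  have hinner2 : (∑ i, ∑ j, A i j * ((-η) • M) i j) = -η * ∑ i, σ i := by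
    rw [← hinner, Finset.mul_sum]
    congr 1; funext i
    rw [Finset.mul_sum]
    congr 1; funext j
    simp only [Matrix.smul_apply, smul_eq_mul]
    ring
  rw [hinner2] at h
  have hquadterm : Lstar / 2 * specNorm ((-η) • M) ^ 2 ≤ Lstar * η ^ 2 / 2 := by
    nlinarith [hspec, Real.sq_sqrt (le_refl (0:ℝ))]
  rw [hnuc]
  linarith
end

section
/- Suppose f : ℝ^{m×n} → ℝ satisfies: (i) the star-convexity condition ⟨∇f(W), W − W*⟩ ≥ f(W) − f* for all W where W* is a minimizer and f* = f(W*); and (ii) ‖W − W*‖_op ≤ D_op at all iterates. If for each iterate f(W_{t+1}) ≤ f(W_t) − η‖∇f(W_t)‖_* + (L_* η²)/2 and 0 < η ≤ D_op, then after T steps: f(W_T) − f* ≤ (1 − η/D_op)^T (f(W_0) − f*) + L_* D_op η / 2. -/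
open scoped BigOperators
open Matrix

namespace MuonAux

variable {m n : ℕ}

lemma conjT_eq (A : Matrix (Fin m) (Fin n) ℝ) : Aᴴ = Aᵀ := by
  ext i j; simp [Matrix.conjTranspose_apply]

lemma dot_mulVec_mulVec (A B : Matrix (Fin m) (Fin n) ℝ) (v w : Fin n → ℝ) :
    (A *ᵥ v) ⬝ᵥ (B *ᵥ w) = v ⬝ᵥ ((Aᵀ * B) *ᵥ w) := by
  rw [Matrix.dotProduct_mulVec v (Aᵀ * B) w, ← Matrix.vecMul_vecMul,
    Matrix.vecMul_transpose, ← Matrix.dotProduct_mulVec]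

lemma sum_col_quad (M V : Matrix (Fin n) (Fin n) ℝ) (hV : V * Vᵀ = 1) :
    ∑ j, (fun i => V i j) ⬝ᵥ (M *ᵥ fun i => V i j) = ∑ i, M i i := by
  have key : ∀ l k, ∑ j, V l j * V k j = if l = k then (1:ℝ) else 0 := by
    intro l k
    have := congrFun (congrFun hV l) k
    simpa [Matrix.mul_apply, Matrix.one_apply] using this
  calc ∑ j, (fun i => V i j) ⬝ᵥ (M *ᵥ fun i => V i j)
      = ∑ j, ∑ l, ∑ k, V l j * (M l k * V k j) := by
        simp [dotProduct, Matrix.mulVec, Finset.mul_sum]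
    _ = ∑ l, ∑ k, ∑ j, V l j * (M l k * V k j) := by
        rw [Finset.sum_comm]
        exact Finset.sum_congr rfl fun l _ => Finset.sum_comm
    _ = ∑ l, ∑ k, M l k * ∑ j, V l j * V k j := by
        refine Finset.sum_congr rfl fun l _ => Finset.sum_congr rfl fun k _ => ?_
        rw [Finset.mul_sum]
        exact Finset.sum_congr rfl fun j _ => by ring
    _ = ∑ i, M i i := by
        simp [key, Finset.sum_ite_eq]


lemma unitary_facts (A : Matrix (Fin m) (Fin n) ℝ) :
    ((Matrix.isHermitian_conjTranspose_mul_self A).eigenvectorUnitary : Matrix (Fin n) (Fin n) ℝ)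
        * ((Matrix.isHermitian_conjTranspose_mul_self A).eigenvectorUnitary : Matrix (Fin n) (Fin n) ℝ)ᵀ = 1 ∧
      ((Matrix.isHermitian_conjTranspose_mul_self A).eigenvectorUnitary : Matrix (Fin n) (Fin n) ℝ)ᵀ
        * ((Matrix.isHermitian_conjTranspose_mul_self A).eigenvectorUnitary : Matrix (Fin n) (Fin n) ℝ) = 1 := by
  constructor
  · rw [← conjT_eq, ← Matrix.star_eq_conjTranspose]
    exact Matrix.mem_unitaryGroup_iff.mp (Matrix.isHermitian_conjTranspose_mul_self A).eigenvectorUnitary.2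
  · rw [← conjT_eq, ← Matrix.star_eq_conjTranspose]
    exact Matrix.mem_unitaryGroup_iff'.mp (Matrix.isHermitian_conjTranspose_mul_self A).eigenvectorUnitary.2

lemma quad_conj (Vm D : Matrix (Fin n) (Fin n) ℝ) (v : Fin n → ℝ) :
    v ⬝ᵥ ((Vm * D * Vmᵀ) *ᵥ v) = (Vmᵀ *ᵥ v) ⬝ᵥ (D *ᵥ (Vmᵀ *ᵥ v)) := by
  rw [← Matrix.mulVec_mulVec, ← Matrix.mulVec_mulVec,
    Matrix.dotProduct_mulVec v Vm, ← Matrix.mulVec_transpose]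

lemma quad_le_sup [Nonempty (Fin n)] (B : Matrix (Fin m) (Fin n) ℝ) (v : Fin n → ℝ) :
    (B *ᵥ v) ⬝ᵥ (B *ᵥ v) ≤
      (⨆ j, (Matrix.isHermitian_conjTranspose_mul_self B).eigenvalues j) * (v ⬝ᵥ v) := by
  set hB := Matrix.isHermitian_conjTranspose_mul_self B with hhB
  set V : Matrix (Fin n) (Fin n) ℝ := (hB.eigenvectorUnitary : Matrix (Fin n) (Fin n) ℝ) with hV
  obtain ⟨hVVt, hVtV⟩ := unitary_facts B
  have hstarV : star V = Vᵀ := by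
    ext i j; simp [Matrix.star_apply, Matrix.transpose_apply]
  have hspec : Bᴴ * B = V * Matrix.diagonal hB.eigenvalues * Vᵀ := by
    refine hB.spectral_theorem.trans ?_
    rw [Unitary.conjStarAlgAut_apply, ← hV, hstarV]
    congr 2
  set u : Fin n → ℝ := Vᵀ *ᵥ v with hu
  have h1 : (B *ᵥ v) ⬝ᵥ (B *ᵥ v) = ∑ k, hB.eigenvalues k * u k ^ 2 := by
    rw [dot_mulVec_mulVec, ← conjT_eq]
    calc v ⬝ᵥ ((Bᴴ * B) *ᵥ v)
        = v ⬝ᵥ ((V * Matrix.diagonal hB.eigenvalues * Vᵀ) *ᵥ v) := by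
          conv_lhs => rw [hspec]
      _ = u ⬝ᵥ (Matrix.diagonal hB.eigenvalues *ᵥ u) := quad_conj V _ v
      _ = ∑ k, hB.eigenvalues k * u k ^ 2 := by
          simp only [dotProduct, Matrix.mulVec_diagonal]
          exact Finset.sum_congr rfl fun k _ => by ring
  have h2 : u ⬝ᵥ u = v ⬝ᵥ v := by
    have h3 := dot_mulVec_mulVec Vᵀ Vᵀ v v
    rw [Matrix.transpose_transpose, hVVt] at h3
    simpa [hu] using h3
  rw [h1, ← h2]
  have hbd : BddAbove (Set.range hB.eigenvalues) := Set.Finite.bddAbove (Set.finite_range _)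
  calc ∑ k, hB.eigenvalues k * u k ^ 2
      ≤ ∑ k, (⨆ j, hB.eigenvalues j) * u k ^ 2 := by
        refine Finset.sum_le_sum fun k _ => ?_
        exact mul_le_mul_of_nonneg_right (le_ciSup hbd k) (sq_nonneg _)
    _ = (⨆ j, hB.eigenvalues j) * (u ⬝ᵥ u) := by
        rw [← Finset.mul_sum]
        congr 1
        simp [dotProduct, sq]

lemma colquad_eq_eigenvalue (A : Matrix (Fin m) (Fin n) ℝ) (j : Fin n) :
    (A *ᵥ ⇑((Matrix.isHermitian_conjTranspose_mul_self A).eigenvectorBasis j)) ⬝ᵥ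
      (A *ᵥ ⇑((Matrix.isHermitian_conjTranspose_mul_self A).eigenvectorBasis j)) =
      (Matrix.isHermitian_conjTranspose_mul_self A).eigenvalues j := by
  set hA := Matrix.isHermitian_conjTranspose_mul_self A
  obtain ⟨hVVt, hVtV⟩ := unitary_facts A
  have hvv : ∑ i, hA.eigenvectorBasis j i * hA.eigenvectorBasis j i = 1 := by
    have h00 := congrFun (congrFun hVtV j) j
    simpa [Matrix.mul_apply, Matrix.one_apply,
      Matrix.IsHermitian.eigenvectorUnitary_apply] using h00
  rw [dot_mulVec_mulVec, ← conjT_eq, hA.mulVec_eigenvectorBasis]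
  simp only [dotProduct, Pi.smul_apply, smul_eq_mul]
  calc ∑ x, hA.eigenvectorBasis j x * (hA.eigenvalues j * hA.eigenvectorBasis j x)
      = hA.eigenvalues j * ∑ x, hA.eigenvectorBasis j x * hA.eigenvectorBasis j x := by
        rw [Finset.mul_sum]; exact Finset.sum_congr rfl fun x _ => by ring
    _ = hA.eigenvalues j := by rw [hvv, mul_one]

lemma nucNorm_nonneg (A : Matrix (Fin m) (Fin n) ℝ) : 0 ≤ nucNorm A :=
  Finset.sum_nonneg fun _ _ => Real.sqrt_nonneg _

lemma inner_le_nuc_spec (A B : Matrix (Fin m) (Fin n) ℝ) :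
    ∑ i, ∑ j, A i j * B i j ≤ nucNorm A * specNorm B := by
  rcases Nat.eq_zero_or_pos n with hn | hn
  · subst hn
    simp [nucNorm]
  haveI : Nonempty (Fin n) := ⟨⟨0, hn⟩⟩
  set hA := Matrix.isHermitian_conjTranspose_mul_self A with hhA
  obtain ⟨hVVt, hVtV⟩ := unitary_facts A
  set V : Matrix (Fin n) (Fin n) ℝ := (hA.eigenvectorUnitary : Matrix (Fin n) (Fin n) ℝ) with hV
  have key : ∑ i, ∑ j, A i j * B i j
      = ∑ j, (A *ᵥ fun i => V i j) ⬝ᵥ (B *ᵥ fun i => V i j) := by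
    rw [Finset.sum_comm]
    rw [show (∑ j, ∑ i, A i j * B i j) = ∑ i, (Aᵀ * B) i i from
      Finset.sum_congr rfl fun j _ => by simp [Matrix.mul_apply]]
    rw [← sum_col_quad (Aᵀ * B) V hVVt]
    exact Finset.sum_congr rfl fun j _ => (dot_mulVec_mulVec A B _ _).symm
  have bound : ∀ j : Fin n,
      (A *ᵥ fun i => V i j) ⬝ᵥ (B *ᵥ fun i => V i j)
        ≤ Real.sqrt (hA.eigenvalues j) * specNorm B := by
    intro j
    set c : Fin n → ℝ := fun i => V i j with hc
    have hcb : c = ⇑(hA.eigenvectorBasis j) := funext fun i => by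
      simp [hc, hV, Matrix.IsHermitian.eigenvectorUnitary_apply]
    have cs : (A *ᵥ c) ⬝ᵥ (B *ᵥ c)
        ≤ Real.sqrt ((A *ᵥ c) ⬝ᵥ (A *ᵥ c)) * Real.sqrt ((B *ᵥ c) ⬝ᵥ (B *ᵥ c)) := by
      have h0 := Real.sum_mul_le_sqrt_mul_sqrt Finset.univ (A *ᵥ c) (B *ᵥ c)
      simpa [dotProduct, pow_two] using h0
    have e1 : (A *ᵥ c) ⬝ᵥ (A *ᵥ c) = hA.eigenvalues j := by
      rw [hcb]; exact colquad_eq_eigenvalue A j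
    have e2 : Real.sqrt ((B *ᵥ c) ⬝ᵥ (B *ᵥ c)) ≤ specNorm B := by
      have hcc : c ⬝ᵥ c = 1 := by
        have h00 := congrFun (congrFun hVtV j) j
        simpa [Matrix.mul_apply, Matrix.one_apply, dotProduct, hc] using h00
      have h4 := quad_le_sup B c
      rw [hcc, mul_one] at h4
      exact Real.sqrt_le_sqrt h4
    refine cs.trans ?_
    rw [e1]
    exact mul_le_mul_of_nonneg_left e2 (Real.sqrt_nonneg _)
  rw [key]
  calc ∑ j, (A *ᵥ fun i => V i j) ⬝ᵥ (B *ᵥ fun i => V i j)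
      ≤ ∑ j, Real.sqrt (hA.eigenvalues j) * specNorm B :=
        Finset.sum_le_sum fun j _ => bound j
    _ = nucNorm A * specNorm B := by rw [nucNorm, Finset.sum_mul]

end MuonAux

/-- Linear convergence of Muon with constant stepsize under star-convexity,
a spectral-norm bound on the iterates, and the per-step descent property. -/
theorem muon_star_convex_linear_convergence
    {m n : ℕ} (f : Matrix (Fin m) (Fin n) ℝ → ℝ)
    (gradf : Matrix (Fin m) (Fin n) ℝ → Matrix (Fin m) (Fin n) ℝ)
    (Wstar : Matrix (Fin m) (Fin n) ℝ)
    (hmin : ∀ W, f Wstar ≤ f W)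
    (hstar : ∀ W : Matrix (Fin m) (Fin n) ℝ,
      f W - f Wstar ≤ ∑ i, ∑ j, gradf W i j * (W - Wstar) i j)
    (W : ℕ → Matrix (Fin m) (Fin n) ℝ)
    (Dop : ℝ) (hD : ∀ t, specNorm (W t - Wstar) ≤ Dop)
    (Lstar : ℝ) (hL : 0 ≤ Lstar)
    (η : ℝ) (hη0 : 0 < η) (hηD : η ≤ Dop)
    (hdesc : ∀ t, f (W (t + 1)) ≤
      f (W t) - η * nucNorm (gradf (W t)) + Lstar * η ^ 2 / 2)
    (T : ℕ) :
    f (W T) - f Wstar ≤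
      (1 - η / Dop) ^ T * (f (W 0) - f Wstar) + Lstar * Dop * η / 2 := by
  have hDop : 0 < Dop := lt_of_lt_of_le hη0 hηD
  have hq0 : 0 ≤ 1 - η / Dop := by
    have : η / Dop ≤ 1 := (div_le_one hDop).mpr hηD
    linarith
  have hC : 0 ≤ Lstar * Dop * η / 2 :=
    div_nonneg (mul_nonneg (mul_nonneg hL hDop.le) hη0.le) (by norm_num)
  have hstep : ∀ t, f (W (t + 1)) - f Wstar ≤
      (1 - η / Dop) * (f (W t) - f Wstar) + Lstar * η ^ 2 / 2 := by
    intro t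
    have h1 : f (W t) - f Wstar ≤ nucNorm (gradf (W t)) * Dop := by
      refine (hstar (W t)).trans ?_
      refine (MuonAux.inner_le_nuc_spec (gradf (W t)) (W t - Wstar)).trans ?_
      exact mul_le_mul_of_nonneg_left (hD t) (MuonAux.nucNorm_nonneg _)
    have h3 : (f (W t) - f Wstar) / Dop ≤ nucNorm (gradf (W t)) := by
      rw [div_le_iff₀ hDop]; exact h1
    have h5 : η * ((f (W t) - f Wstar) / Dop) ≤ η * nucNorm (gradf (W t)) :=
      mul_le_mul_of_nonneg_left h3 hη0.le
    have h6 : η * ((f (W t) - f Wstar) / Dop) = (η / Dop) * (f (W t) - f Wstar) := by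
      ring
    calc f (W (t + 1)) - f Wstar
        ≤ (f (W t) - f Wstar) - η * nucNorm (gradf (W t)) + Lstar * η ^ 2 / 2 := by
          linarith [hdesc t]
      _ ≤ (f (W t) - f Wstar) - (η / Dop) * (f (W t) - f Wstar) + Lstar * η ^ 2 / 2 := by
          linarith [h5, h6.symm.le, h6.le]
      _ = (1 - η / Dop) * (f (W t) - f Wstar) + Lstar * η ^ 2 / 2 := by ring
  induction T with
  | zero => simp; linarith
  | succ T ih =>
    have h7 := hstep T
    have h8 : (1 - η / Dop) * (f (W T) - f Wstar)
        ≤ (1 - η / Dop) * ((1 - η / Dop) ^ T * (f (W 0) - f Wstar) + Lstar * Dop * η / 2) :=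
      mul_le_mul_of_nonneg_left ih hq0
    have h9 : (1 - η / Dop) * (Lstar * Dop * η / 2) + Lstar * η ^ 2 / 2
        = Lstar * Dop * η / 2 := by
      field_simp
      ring
    calc f (W (T + 1)) - f Wstar
        ≤ (1 - η / Dop) * (f (W T) - f Wstar) + Lstar * η ^ 2 / 2 := h7
      _ ≤ (1 - η / Dop) * ((1 - η / Dop) ^ T * (f (W 0) - f Wstar))
            + ((1 - η / Dop) * (Lstar * Dop * η / 2) + Lstar * η ^ 2 / 2) := by
          linarith [h8]
      _ = (1 - η / Dop) ^ (T + 1) * (f (W 0) - f Wstar) + Lstar * Dop * η / 2 := by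
          linear_combination h9
end
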